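/- arXiv:1703.03938 — 5 statements merged into one kernel-verified Lean document; each statement's English description precedes it below -/
import Mathlib

section
/- Let D = ℝ⁺ × ℝ⁺, let β₁, β₂ > 0, and let Φ : D → ℝ⁺ be a function satisfying Φ(β₁·x + β₂·y) = β₁·Φ(x) + β₂·Φ(y) for all x, y ∈ D (with scalar multiplication and addition taken componentwise), and suppose Φ(x) → 0 as x → (0,0). Then Φ is additive: Φ(x + y) = Φ(x) + Φ(y) for all x, y ∈ D. -/
theorem stmt_4 (Φ : ℝ × ℝ → ℝ) (β₁ β₂ : ℝ) (hβ₁ : 0 < β₁) (hβ₂ : 0 < β₂)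
    (hpos : ∀ p : ℝ × ℝ, p ∈ Set.Ioi (0:ℝ) ×ˢ Set.Ioi (0:ℝ) → 0 < Φ p)
    (heq : ∀ p q : ℝ × ℝ, p ∈ Set.Ioi (0:ℝ) ×ˢ Set.Ioi (0:ℝ) →
      q ∈ Set.Ioi (0:ℝ) ×ˢ Set.Ioi (0:ℝ) →
      Φ (β₁ • p + β₂ • q) = β₁ * Φ p + β₂ * Φ q)
    (hlim : Filter.Tendsto Φ
      (nhdsWithin (0, 0) (Set.Ioi (0:ℝ) ×ˢ Set.Ioi (0:ℝ))) (nhds 0)) :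
    ∀ p q : ℝ × ℝ, p ∈ Set.Ioi (0:ℝ) ×ˢ Set.Ioi (0:ℝ) →
      q ∈ Set.Ioi (0:ℝ) ×ˢ Set.Ioi (0:ℝ) → Φ (p + q) = Φ p + Φ q := by
  set D : Set (ℝ × ℝ) := Set.Ioi (0:ℝ) ×ˢ Set.Ioi (0:ℝ) with hD
  have h00 : ((0, 0) : ℝ × ℝ) = 0 := rfl
  rw [h00] at hlim
  -- smul stays in D
  have hDmem : ∀ c : ℝ, 0 < c → ∀ p : ℝ × ℝ, p ∈ D → c • p ∈ D := by
    intro c hc p hp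
    exact ⟨mul_pos hc hp.1, mul_pos hc hp.2⟩
  have hDadd : ∀ p ∈ D, ∀ q ∈ D, p + q ∈ D := by
    intro p hp q hq
    exact ⟨show 0 < p.1 + q.1 from add_pos hp.1 hq.1, show 0 < p.2 + q.2 from add_pos hp.2 hq.2⟩
  -- the filter is nontrivial
  have hne : (nhdsWithin (0 : ℝ × ℝ) D).NeBot := by
    rw [hD, ← h00, nhdsWithin_prod_eq]
    exact Filter.prod_neBot.mpr ⟨nhdsGT_neBot 0, nhdsGT_neBot 0⟩
  -- scaling tends to 0 within D
  have hsm : ∀ c : ℝ, 0 < c →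
      Filter.Tendsto (fun δ : ℝ × ℝ => c • δ) (nhdsWithin 0 D) (nhdsWithin 0 D) := by
    intro c hc
    apply tendsto_nhdsWithin_of_tendsto_nhds_of_eventually_within
    · have h := (continuous_const_smul c).tendsto (0 : ℝ × ℝ)
      rw [smul_zero] at h
      exact h.mono_left nhdsWithin_le_nhds
    · filter_upwards [self_mem_nhdsWithin] with δ hδ using hDmem c hc δ hδ
  have hΦ0 : ∀ c : ℝ, 0 < c →
      Filter.Tendsto (fun δ : ℝ × ℝ => Φ (c • δ)) (nhdsWithin 0 D) (nhds 0) :=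
    fun c hc => hlim.comp (hsm c hc)
  -- Step 1: β₁ * Φ (β₁⁻¹ • w) = β₂ * Φ (β₂⁻¹ • w)
  have key : ∀ w ∈ D, β₁ * Φ (β₁⁻¹ • w) = β₂ * Φ (β₂⁻¹ • w) := by
    intro w hw
    have hfun : ∀ δ ∈ D,
        β₁ * Φ (β₁⁻¹ • w) + β₂ * Φ (β₁ • δ) = β₂ * Φ (β₂⁻¹ • w) + β₁ * Φ (β₂ • δ) := by
      intro δ hδ
      have e1 := heq (β₁⁻¹ • w) (β₁ • δ) (hDmem _ (inv_pos.2 hβ₁) w hw) (hDmem _ hβ₁ δ hδ)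
      have e2 := heq (β₂ • δ) (β₂⁻¹ • w) (hDmem _ hβ₂ δ hδ) (hDmem _ (inv_pos.2 hβ₂) w hw)
      have hpt : β₁ • β₁⁻¹ • w + β₂ • β₁ • δ = β₁ • β₂ • δ + β₂ • β₂⁻¹ • w := by
        rw [smul_smul, smul_smul, smul_smul, smul_smul, mul_inv_cancel₀ hβ₁.ne',
          mul_inv_cancel₀ hβ₂.ne', one_smul, mul_comm β₂ β₁, add_comm]
      rw [hpt, e2] at e1
      linarith
    have t1 : Filter.Tendsto (fun δ : ℝ × ℝ => β₁ * Φ (β₁⁻¹ • w) + β₂ * Φ (β₁ • δ))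
        (nhdsWithin 0 D) (nhds (β₁ * Φ (β₁⁻¹ • w))) := by
      have h := ((hΦ0 β₁ hβ₁).const_mul β₂).const_add (β₁ * Φ (β₁⁻¹ • w))
      simpa using h
    have t2 : Filter.Tendsto (fun δ : ℝ × ℝ => β₂ * Φ (β₂⁻¹ • w) + β₁ * Φ (β₂ • δ))
        (nhdsWithin 0 D) (nhds (β₂ * Φ (β₂⁻¹ • w))) := by
      have h := ((hΦ0 β₂ hβ₂).const_mul β₁).const_add (β₂ * Φ (β₂⁻¹ • w))
      simpa using h
    have heqf : (fun δ : ℝ × ℝ => β₁ * Φ (β₁⁻¹ • w) + β₂ * Φ (β₁ • δ)) =ᶠ[nhdsWithin 0 D]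
        (fun δ : ℝ × ℝ => β₂ * Φ (β₂⁻¹ • w) + β₁ * Φ (β₂ • δ)) := by
      filter_upwards [self_mem_nhdsWithin] with δ hδ using hfun δ hδ
    exact tendsto_nhds_unique (t1.congr' heqf) t2
  -- Step 2: Φ (u + d) = ψ u + ψ d with ψ x = β₁ * Φ (β₁⁻¹ • x)
  have step2 : ∀ u ∈ D, ∀ d ∈ D,
      Φ (u + d) = β₁ * Φ (β₁⁻¹ • u) + β₁ * Φ (β₁⁻¹ • d) := by
    intro u hu d hd
    have e := heq (β₁⁻¹ • u) (β₂⁻¹ • d) (hDmem _ (inv_pos.2 hβ₁) u hu)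
      (hDmem _ (inv_pos.2 hβ₂) d hd)
    have hpt : β₁ • β₁⁻¹ • u + β₂ • β₂⁻¹ • d = u + d := by
      rw [smul_smul, smul_smul, mul_inv_cancel₀ hβ₁.ne', mul_inv_cancel₀ hβ₂.ne',
        one_smul, one_smul]
    rw [hpt] at e
    rw [e, key d hd]
  -- Step 3: ψ(u+d) = ψ₂ u + ψ₂ d
  have step3 : ∀ u ∈ D, ∀ d ∈ D,
      β₁ * Φ (β₁⁻¹ • (u + d)) =
        β₁ * (β₁ * Φ (β₁⁻¹ • β₁⁻¹ • u)) + β₁ * (β₁ * Φ (β₁⁻¹ • β₁⁻¹ • d)) := by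
    intro u hu d hd
    have e := step2 (β₁⁻¹ • u) (hDmem _ (inv_pos.2 hβ₁) u hu)
      (β₁⁻¹ • d) (hDmem _ (inv_pos.2 hβ₁) d hd)
    rw [smul_add]
    rw [e]
    ring
  -- Step 4: ψ - ψ₂ is constant on D
  have step4 : ∀ a ∈ D, ∀ c ∈ D,
      β₁ * Φ (β₁⁻¹ • a) - β₁ * (β₁ * Φ (β₁⁻¹ • β₁⁻¹ • a)) =
        β₁ * Φ (β₁⁻¹ • c) - β₁ * (β₁ * Φ (β₁⁻¹ • β₁⁻¹ • c)) := by
    intro a ha c hc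
    have hac : a + c ∈ D := hDadd a ha c hc
    have e1 : Φ (a + (a + c)) = Φ ((a + a) + c) := by rw [add_assoc]
    rw [step2 a ha (a + c) hac, step2 (a + a) (hDadd a ha a ha) c hc,
      step3 a ha c hc, step3 a ha a ha] at e1
    linarith
  -- Step 5: the constant is 0, so ψ = ψ₂ on D
  have step5 : ∀ c ∈ D, β₁ * Φ (β₁⁻¹ • c) = β₁ * (β₁ * Φ (β₁⁻¹ • β₁⁻¹ • c)) := by
    intro c hc
    set k : ℝ := β₁ * Φ (β₁⁻¹ • c) - β₁ * (β₁ * Φ (β₁⁻¹ • β₁⁻¹ • c)) with hk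
    have tψ : Filter.Tendsto (fun a : ℝ × ℝ => β₁ * Φ (β₁⁻¹ • a))
        (nhdsWithin 0 D) (nhds 0) := by
      have h := (hΦ0 β₁⁻¹ (inv_pos.2 hβ₁)).const_mul β₁
      simpa using h
    have tψ2 : Filter.Tendsto (fun a : ℝ × ℝ => β₁ * (β₁ * Φ (β₁⁻¹ • β₁⁻¹ • a)))
        (nhdsWithin 0 D) (nhds 0) := by
      have h0 : ∀ a : ℝ × ℝ, β₁⁻¹ • β₁⁻¹ • a = (β₁⁻¹ * β₁⁻¹) • a := by
        intro a; rw [smul_smul]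
      have h := ((hΦ0 (β₁⁻¹ * β₁⁻¹) (mul_pos (inv_pos.2 hβ₁) (inv_pos.2 hβ₁))).const_mul
        β₁).const_mul β₁
      simp only [mul_zero] at h
      refine h.congr (fun a => ?_)
      rw [h0 a]
    have tdiff : Filter.Tendsto (fun a : ℝ × ℝ =>
        β₁ * Φ (β₁⁻¹ • a) - β₁ * (β₁ * Φ (β₁⁻¹ • β₁⁻¹ • a))) (nhdsWithin 0 D) (nhds 0) := by
      have h := tψ.sub tψ2
      simpa using h
    have tconst : Filter.Tendsto (fun _ : ℝ × ℝ => k) (nhdsWithin 0 D) (nhds k) :=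
      tendsto_const_nhds
    have heqf : (fun a : ℝ × ℝ =>
        β₁ * Φ (β₁⁻¹ • a) - β₁ * (β₁ * Φ (β₁⁻¹ • β₁⁻¹ • a))) =ᶠ[nhdsWithin 0 D]
        (fun _ : ℝ × ℝ => k) := by
      filter_upwards [self_mem_nhdsWithin] with a ha
      rw [hk, step4 a ha c hc]
    have hk0 : k = 0 := tendsto_nhds_unique (tconst.congr' heqf.symm) tdiff
    rw [hk] at hk0
    linarith
  -- Step 6: Φ = ψ on D
  have half : ∀ p : ℝ × ℝ, p ∈ D → ((2:ℝ)⁻¹ • p) ∈ D :=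
    fun p hp => hDmem _ (by norm_num) p hp
  have hsplit : ∀ p : ℝ × ℝ, (2:ℝ)⁻¹ • p + (2:ℝ)⁻¹ • p = p := by
    intro p
    rw [← add_smul]
    norm_num
  have step6 : ∀ p ∈ D, Φ p = β₁ * Φ (β₁⁻¹ • p) := by
    intro p hp
    have e1 : Φ p = 2 * (β₁ * Φ (β₁⁻¹ • (2:ℝ)⁻¹ • p)) := by
      have := step2 ((2:ℝ)⁻¹ • p) (half p hp) ((2:ℝ)⁻¹ • p) (half p hp)
      rw [hsplit p] at this
      linarith
    have e2 : Φ (β₁⁻¹ • p) = 2 * (β₁ * Φ (β₁⁻¹ • (2:ℝ)⁻¹ • β₁⁻¹ • p)) := by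
      have := step2 ((2:ℝ)⁻¹ • β₁⁻¹ • p) (half _ (hDmem _ (inv_pos.2 hβ₁) p hp))
        ((2:ℝ)⁻¹ • β₁⁻¹ • p) (half _ (hDmem _ (inv_pos.2 hβ₁) p hp))
      rw [hsplit (β₁⁻¹ • p)] at this
      linarith
    have e3 := step5 ((2:ℝ)⁻¹ • p) (half p hp)
    have hcomm : β₁⁻¹ • (2:ℝ)⁻¹ • β₁⁻¹ • p = β₁⁻¹ • β₁⁻¹ • (2:ℝ)⁻¹ • p := by
      rw [smul_smul, smul_smul, smul_smul, smul_smul]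
      ring_nf
    rw [e1, e2, hcomm]
    linarith
  -- conclusion
  intro p q hp hq
  have e := step2 p hp q hq
  rw [e, ← step6 p hp, ← step6 q hq]
end

section
/- Let φ : ℝ⁺ → ℝ⁺ be a continuous bijection, let α₁, α₂ > 0, and let a, b ≥ 0 with a + b ≠ 0 satisfy α₁·φ(x) + α₂·φ(y) = φ(a·x + b·y) for all x, y > 0. Then φ is strictly increasing (it cannot be strictly decreasing). -/
theorem stmt_6 (φ : ℝ → ℝ) (α₁ α₂ a b : ℝ)
    (hα₁ : 0 < α₁) (hα₂ : 0 < α₂) (ha : 0 ≤ a) (hb : 0 ≤ b) (hab : a + b ≠ 0)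
    (hbij : Set.BijOn φ (Set.Ioi (0:ℝ)) (Set.Ioi (0:ℝ)))
    (hcont : ContinuousOn φ (Set.Ioi (0:ℝ)))
    (heq : ∀ x y : ℝ, 0 < x → 0 < y →
      α₁ * φ x + α₂ * φ y = φ (a * x + b * y)) :
    StrictMonoOn φ (Set.Ioi (0:ℝ)) := by
  have hinj : Set.InjOn φ (Set.Ioi (0:ℝ)) := hbij.injOn
  have hφpos : ∀ z : ℝ, 0 < z → 0 < φ z := fun z hz => hbij.mapsTo hz
  -- dichotomy: φ is strictly monotone or strictly antitone on Ioi 0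
  have hdi : StrictMonoOn φ (Set.Ioi (0:ℝ)) ∨ StrictAntiOn φ (Set.Ioi (0:ℝ)) := by
    by_cases hmono : StrictMonoOn φ (Set.Ioi (0:ℝ))
    · exact Or.inl hmono
    · right
      -- there exist u < v in Ioi 0 with φ v ≤ φ u
      have : ∃ u v : ℝ, 0 < u ∧ u < v ∧ φ v < φ u := by
        by_contra h
        push_neg at h
        apply hmono
        intro x hx y hy hxy
        rcases lt_or_ge (φ x) (φ y) with h1 | h1
        · exact h1
        · exfalso
          have := h x y hx hxy
          have : φ x = φ y := le_antisymm this h1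
          exact absurd (hinj hx hy this) (ne_of_lt hxy)
      obtain ⟨u, v, hu, huv, hfuv⟩ := this
      intro x hx y hy hxy
      set c := min x u with hc
      set d := max y v with hd
      have hc0 : 0 < c := lt_min hx hu
      have hcd : c ≤ d := le_trans (min_le_left _ _) (le_trans hxy.le (le_max_left _ _))
      have hsub : Set.Icc c d ⊆ Set.Ioi (0:ℝ) := fun z hz => lt_of_lt_of_le hc0 hz.1
      have hdich := ContinuousOn.strictMonoOn_of_injOn_Icc' hcd
        (hcont.mono hsub) (hinj.mono hsub)
      have huIcc : u ∈ Set.Icc c d := ⟨min_le_right _ _,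
        le_trans (le_trans huv.le (le_max_right _ _)) le_rfl⟩
      have hvIcc : v ∈ Set.Icc c d := ⟨le_trans (min_le_right _ _) huv.le, le_max_right _ _⟩
      have hxIcc : x ∈ Set.Icc c d := ⟨min_le_left _ _,
        le_trans hxy.le (le_max_left _ _)⟩
      have hyIcc : y ∈ Set.Icc c d := ⟨le_trans (min_le_left _ _) hxy.le, le_max_left _ _⟩
      rcases hdich with hm | hA
      · exact absurd (hm huIcc hvIcc huv) (not_lt.mpr hfuv.le)
      · exact hA hxIcc hyIcc hxy
  rcases hdi with h | hanti
  · exact h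
  exfalso
  have hφ1 : 0 < φ 1 := hφpos 1 one_pos
  rcases ha.lt_or_eq with ha' | ha'
  · -- a > 0 : φ z > α₂ φ 1 for all z > b
    have key : ∀ z : ℝ, b < z → α₂ * φ 1 < φ z := by
      intro z hz
      have hx : 0 < (z - b) / a := div_pos (by linarith) ha'
      have := heq ((z - b) / a) 1 hx one_pos
      have hzz : a * ((z - b) / a) + b * 1 = z := by
        field_simp; ring
      rw [hzz] at this
      nlinarith [hφpos _ hx]
    -- surjectivity gives z₀ with φ z₀ = α₂ φ 1 / 2
    obtain ⟨z₀, hz₀, hfz₀⟩ := hbij.surjOn (show α₂ * φ 1 / 2 ∈ Set.Ioi (0:ℝ) by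
      simp only [Set.mem_Ioi]; positivity)
    have hz₀' : (0:ℝ) < z₀ := hz₀
    set z₁ := max z₀ b + 1 with hz₁
    have hz₁b : b < z₁ := by
      have := le_max_right z₀ b; simp only [hz₁]; linarith
    have hz₁z₀ : z₀ < z₁ := by
      have := le_max_left z₀ b; simp only [hz₁]; linarith
    have h1 := key z₁ hz₁b
    have h2 := hanti hz₀ (show z₁ ∈ Set.Ioi (0:ℝ) from lt_trans hz₀' hz₁z₀) hz₁z₀
    rw [hfz₀] at h2
    nlinarith
  · -- a = 0, so b > 0 : φ z > α₁ φ 1 for all z > 0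
    have hb' : 0 < b := hb.lt_of_ne (fun h => hab (by linarith))
    have key : ∀ z : ℝ, 0 < z → α₁ * φ 1 < φ z := by
      intro z hz
      have hy : 0 < z / b := div_pos hz hb'
      have := heq 1 (z / b) one_pos hy
      have hzz : a * 1 + b * (z / b) = z := by
        rw [← ha']; field_simp; ring
      rw [hzz] at this
      nlinarith [hφpos _ hy]
    obtain ⟨z₀, hz₀, hfz₀⟩ := hbij.surjOn (show α₁ * φ 1 / 2 ∈ Set.Ioi (0:ℝ) by
      simp only [Set.mem_Ioi]; positivity)
    have := key z₀ hz₀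
    rw [hfz₀] at this
    nlinarith
end

section
/- Let φ : ℝ⁺ → ℝ⁺ be a strictly increasing continuous bijection, α₁, α₂ > 0, and a, b ≥ 0 with a + b ≠ 0, such that α₁·φ(x) + α₂·φ(y) = φ(a·x + b·y) for all x, y > 0. Then a > 0, b > 0, φ satisfies α₁·φ(x) = φ(a·x) and α₂·φ(y) = φ(b·y) for all x, y > 0, and φ(x + y) = φ(x) + φ(y) for all x, y > 0. -/
theorem stmt_7 (φ : ℝ → ℝ) (α₁ α₂ a b : ℝ)
    (hα₁ : 0 < α₁) (hα₂ : 0 < α₂) (ha : 0 ≤ a) (hb : 0 ≤ b) (hab : a + b ≠ 0)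
    (hbij : Set.BijOn φ (Set.Ioi (0:ℝ)) (Set.Ioi (0:ℝ)))
    (hcont : ContinuousOn φ (Set.Ioi (0:ℝ)))
    (hmono : StrictMonoOn φ (Set.Ioi (0:ℝ)))
    (heq : ∀ x y : ℝ, 0 < x → 0 < y →
      α₁ * φ x + α₂ * φ y = φ (a * x + b * y)) :
    0 < a ∧ 0 < b ∧
    (∀ x : ℝ, 0 < x → α₁ * φ x = φ (a * x)) ∧
    (∀ y : ℝ, 0 < y → α₂ * φ y = φ (b * y)) ∧
    (∀ x y : ℝ, 0 < x → 0 < y → φ (x + y) = φ x + φ y) := by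
  -- a > 0
  have h12 : φ 1 < φ 2 := hmono (by norm_num) (by norm_num) (by norm_num)
  have hapos : 0 < a := by
    rcases ha.lt_or_eq with h | h
    · exact h
    · exfalso
      have hbpos : 0 < b := by
        rcases hb.lt_or_eq with h' | h'
        · exact h'
        · exact (hab (show a + b = 0 by rw [← h, ← h']; norm_num)).elim
      have e1 := heq 1 1 one_pos one_pos
      have e2 := heq 2 1 (by norm_num) one_pos
      rw [← h] at e1 e2
      simp only [zero_mul] at e1 e2
      have : α₁ * φ 1 = α₁ * φ 2 := by linarith
      have := mul_left_cancel₀ (ne_of_gt hα₁) this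
      linarith
  have hbpos : 0 < b := by
    rcases hb.lt_or_eq with h | h
    · exact h
    · exfalso
      have e1 := heq 1 1 one_pos one_pos
      have e2 := heq 1 2 (by norm_num) (by norm_num)
      rw [← h] at e1 e2
      simp only [zero_mul] at e1 e2
      have : α₂ * φ 1 = α₂ * φ 2 := by linarith
      have := mul_left_cancel₀ (ne_of_gt hα₂) this
      linarith
  -- φ(y) → 0 as y → 0⁺
  have hpos : ∀ z : ℝ, 0 < z → 0 < φ z := fun z hz => hbij.mapsTo hz
  have hφ0 : Filter.Tendsto φ (nhdsWithin 0 (Set.Ioi 0)) (nhds 0) := by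
    rw [Metric.tendsto_nhdsWithin_nhds]
    intro ε hε
    obtain ⟨y₀, hy₀, hy₀ε⟩ := hbij.surjOn (show ε/2 ∈ Set.Ioi (0:ℝ) from half_pos hε)
    refine ⟨y₀, hy₀, fun y hy hyd => ?_⟩
    have hy' : 0 < y := hy
    have hyy₀ : y < y₀ := by
      rw [Real.dist_eq, abs_of_pos (by linarith)] at hyd
      linarith
    have h1 : φ y < φ y₀ := hmono hy hy₀ hyy₀
    rw [Real.dist_eq, sub_zero, abs_of_pos (hpos y hy')]
    rw [hy₀ε] at h1
    linarith
  have key : ∀ x : ℝ, 0 < x → α₁ * φ x = φ (a * x) := by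
    intro x hx
    have hax : 0 < a * x := mul_pos hapos hx
    -- tendsto (fun y => a*x + b*y) (nhdsWithin 0 (Ioi 0)) (nhdsWithin (a*x) (Ioi 0))
    have ht : Filter.Tendsto (fun y => a * x + b * y) (nhdsWithin 0 (Set.Ioi 0))
        (nhdsWithin (a * x) (Set.Ioi 0)) := by
      rw [tendsto_nhdsWithin_iff]
      constructor
      · have : Filter.Tendsto (fun y => a * x + b * y) (nhds 0) (nhds (a * x + b * 0)) := by
          exact (continuous_const.add (continuous_const.mul continuous_id)).tendsto 0
        simpa using this.mono_left nhdsWithin_le_nhds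
      · filter_upwards [self_mem_nhdsWithin] with y hy
        exact lt_trans hax (by nlinarith [Set.mem_Ioi.mp hy])
    have hRHS : Filter.Tendsto (fun y => φ (a * x + b * y)) (nhdsWithin 0 (Set.Ioi 0))
        (nhds (φ (a * x))) := (hcont (a*x) hax).tendsto.comp ht
    have hLHS : Filter.Tendsto (fun y => α₁ * φ x + α₂ * φ y) (nhdsWithin 0 (Set.Ioi 0))
        (nhds (α₁ * φ x + α₂ * 0)) :=
      Filter.Tendsto.const_add _ (hφ0.const_mul α₂)
    have heqf : (fun y => α₁ * φ x + α₂ * φ y) =ᶠ[nhdsWithin 0 (Set.Ioi 0)]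
        (fun y => φ (a * x + b * y)) := by
      filter_upwards [self_mem_nhdsWithin] with y hy
      exact heq x y hx hy
    have := tendsto_nhds_unique (hLHS.congr' heqf) hRHS
    simpa using this
  have key2 : ∀ y : ℝ, 0 < y → α₂ * φ y = φ (b * y) := by
    intro y hy
    have hby : 0 < b * y := mul_pos hbpos hy
    have ht : Filter.Tendsto (fun x => a * x + b * y) (nhdsWithin 0 (Set.Ioi 0))
        (nhdsWithin (b * y) (Set.Ioi 0)) := by
      rw [tendsto_nhdsWithin_iff]
      constructor
      · have : Filter.Tendsto (fun x => a * x + b * y) (nhds 0) (nhds (a * 0 + b * y)) :=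
          ((continuous_const.mul continuous_id).add continuous_const).tendsto 0
        simpa using this.mono_left nhdsWithin_le_nhds
      · filter_upwards [self_mem_nhdsWithin] with x hx
        exact lt_trans hby (by nlinarith [Set.mem_Ioi.mp hx])
    have hRHS : Filter.Tendsto (fun x => φ (a * x + b * y)) (nhdsWithin 0 (Set.Ioi 0))
        (nhds (φ (b * y))) := (hcont (b*y) hby).tendsto.comp ht
    have hLHS : Filter.Tendsto (fun x => α₁ * φ x + α₂ * φ y) (nhdsWithin 0 (Set.Ioi 0))
        (nhds (α₁ * 0 + α₂ * φ y)) :=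
      Filter.Tendsto.add_const _ (hφ0.const_mul α₁)
    have heqf : (fun x => α₁ * φ x + α₂ * φ y) =ᶠ[nhdsWithin 0 (Set.Ioi 0)]
        (fun x => φ (a * x + b * y)) := by
      filter_upwards [self_mem_nhdsWithin] with x hx
      exact heq x y hx hy
    have := tendsto_nhds_unique (hLHS.congr' heqf) hRHS
    simpa using this
  refine ⟨hapos, hbpos, key, key2, ?_⟩
  intro x y hx hy
  have hu : 0 < x / a := div_pos hx hapos
  have hv : 0 < y / b := div_pos hy hbpos
  have e := heq (x/a) (y/b) hu hv
  rw [key _ hu, key2 _ hv] at e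
  rw [mul_div_cancel₀ _ (ne_of_gt hapos), mul_div_cancel₀ _ (ne_of_gt hbpos)] at e
  linarith
end

section
/- Let I ⊆ ℝ be a nonempty interval, f, g : I → ℝ⁺ continuous bijections, and α₁, α₂, β₁, β₂ > 0. Suppose that for all x, y, z, w ∈ I: f⁻¹(α₁·f(g⁻¹(β₁·g(x) + β₂·g(y))) + α₂·f(g⁻¹(β₁·g(z) + β₂·g(w)))) = g⁻¹(β₁·g(f⁻¹(α₁·f(x) + α₂·f(z))) + β₂·g(f⁻¹(α₁·f(y) + α₂·f(w)))). Then there exists c > 0 such that f = c·g. -/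
/-- Cauchy's functional equation on the positive half-line, with nonnegativity. -/
lemma cauchy_lin (c : ℝ → ℝ)
    (hadd : ∀ x y : ℝ, 0 < x → 0 < y → c (x + y) = c x + c y)
    (hpos : ∀ x : ℝ, 0 < x → 0 ≤ c x) :
    ∀ x : ℝ, 0 < x → c x = c 1 * x := by
  have hmono : ∀ x y : ℝ, 0 < x → x < y → c x ≤ c y := by
    intro x y hx hxy
    have h := hadd x (y - x) hx (by linarith)
    have hx' : x + (y - x) = y := by ring
    rw [hx'] at h
    have := hpos (y - x) (by linarith)
    linarith
  have hnat : ∀ n : ℕ, ∀ x : ℝ, 0 < x → c (((n : ℝ) + 1) * x) = ((n : ℝ) + 1) * c x := by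
    intro n
    induction n with
    | zero => intro x hx; push_cast; simp
    | succ k ih =>
      intro x hx
      have h1 : (((k : ℕ) + 1 : ℕ) + 1 : ℝ) * x = ((k : ℝ) + 1) * x + x := by push_cast; ring
      have h2 : c (((k : ℝ) + 1) * x + x) = c (((k : ℝ) + 1) * x) + c x :=
        hadd _ _ (by positivity) hx
      have h3 := ih x hx
      push_cast
      calc c (((k:ℝ) + 1 + 1) * x) = c (((k : ℝ) + 1) * x + x) := by ring_nf
        _ = ((k : ℝ) + 1) * c x + c x := by rw [h2, h3]
        _ = ((k:ℝ) + 1 + 1) * c x := by ring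
  have hq : ∀ q : ℚ, 0 < q → c (q : ℝ) = (q : ℝ) * c 1 := by
    intro q hq0
    obtain ⟨m, hm⟩ : ∃ m : ℕ, q.den = m + 1 := ⟨q.den - 1, (Nat.succ_pred_eq_of_pos q.pos).symm⟩
    obtain ⟨n, hn⟩ : ∃ n : ℕ, q.num.toNat = n + 1 := by
      refine ⟨q.num.toNat - 1, (Nat.succ_pred_eq_of_pos ?_).symm⟩
      have := Rat.num_pos.mpr hq0
      omega
    have hqpos : (0 : ℝ) < (q : ℝ) := by exact_mod_cast hq0
    have hden : ((m : ℝ) + 1) * (q : ℝ) = (n : ℝ) + 1 := by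
      have h1 : ((q.den : ℝ)) * (q : ℝ) = (q.num : ℝ) := by
        rw [Rat.cast_def]
        field_simp
      have h2 : (q.num : ℝ) = (n : ℝ) + 1 := by
        have : (q.num.toNat : ℤ) = q.num := Int.toNat_of_nonneg (by positivity)
        rw [← this, hn]; push_cast; ring
      rw [← h2, ← h1, hm]; push_cast; ring
    have h3 := hnat m (q : ℝ) hqpos
    rw [hden] at h3
    have h4 := hnat n 1 one_pos
    rw [mul_one] at h4
    -- h3 : c ((n:ℝ)+1) = ((m:ℝ)+1) * c q,  h4 : c ((n:ℝ)+1) = ((n:ℝ)+1) * c 1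
    have h5 : ((m : ℝ) + 1) * c (q : ℝ) = ((n : ℝ) + 1) * c 1 := by rw [← h3, h4]
    have hm1 : (0:ℝ) < (m : ℝ) + 1 := by positivity
    have : c (q : ℝ) = (((n : ℝ) + 1) / ((m : ℝ) + 1)) * c 1 := by
      field_simp
      linarith
    rw [this]
    have : ((n : ℝ) + 1) / ((m : ℝ) + 1) = (q : ℝ) := by
      rw [← hden]; field_simp
    rw [this]
  have hc1 : 0 ≤ c 1 := hpos 1 one_pos
  intro x hx
  by_contra hne
  rcases lt_or_gt_of_ne hne with hlt | hgt
  · -- c x < c 1 * x : pick rational q with max 0 (x - (c1*x - cx)/(c1+1)) < q < x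
    have hgap : 0 < c 1 * x - c x := by linarith
    set δ : ℝ := (c 1 * x - c x) / (c 1 + 1) with hδ
    have hδpos : 0 < δ := by positivity
    obtain ⟨q, hq1, hq2⟩ := exists_rat_btwn (show max 0 (x - δ) < x by
      rcases le_or_gt 0 (x - δ) with h | h
      · rw [max_eq_right h]; linarith
      · rw [max_eq_left h.le]; exact hx)
    have hq0 : (0:ℝ) < (q:ℝ) := lt_of_le_of_lt (le_max_left _ _) hq1
    have hq0' : 0 < q := by exact_mod_cast hq0
    have h6 : c (q : ℝ) ≤ c x := hmono _ _ hq0 hq2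
    rw [hq q hq0'] at h6
    have h7 : x - δ < (q : ℝ) := lt_of_le_of_lt (le_max_right _ _) hq1
    have h8 : (x - δ) * c 1 ≤ (q : ℝ) * c 1 := by nlinarith
    have h9 : δ * (c 1) < c 1 * x - c x := by
      rw [hδ]
      rw [div_mul_eq_mul_div]
      rw [div_lt_iff₀ (by positivity)]
      nlinarith
    nlinarith
  · -- c x > c 1 * x : pick rational q with x < q < x + (cx - c1x)/(c1+1)
    have hgap : 0 < c x - c 1 * x := by linarith
    set δ : ℝ := (c x - c 1 * x) / (c 1 + 1) with hδ
    have hδpos : 0 < δ := by positivity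
    obtain ⟨q, hq1, hq2⟩ := exists_rat_btwn (show x < x + δ by linarith)
    have hq0 : (0:ℝ) < (q:ℝ) := lt_trans hx hq1
    have hq0' : 0 < q := by exact_mod_cast hq0
    have h6 : c x ≤ c (q : ℝ) := hmono _ _ hx hq1
    rw [hq q hq0'] at h6
    have h8 : (q : ℝ) * c 1 ≤ (x + δ) * c 1 := by nlinarith
    have h9 : δ * (c 1) < c x - c 1 * x := by
      rw [hδ, div_mul_eq_mul_div, div_lt_iff₀ (by positivity)]
      nlinarith
    nlinarith


open Set

/-- A continuous injective function on an ord-connected set is strictly monotone or antitone. -/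
lemma dichotomy (I : Set ℝ) (hIoc : I.OrdConnected) (f : ℝ → ℝ)
    (hc : ContinuousOn f I) (hi : Set.InjOn f I) :
    StrictMonoOn f I ∨ StrictAntiOn f I := by
  by_cases hex : ∃ a ∈ I, ∃ b ∈ I, a < b
  · obtain ⟨a, ha, b, hb, hab⟩ := hex
    have hsub : ∀ s t : ℝ, s ∈ I → t ∈ I → Icc s t ⊆ I := fun s t hs ht => hIoc.out hs ht
    have key : ∀ x ∈ I, ∀ y ∈ I, x < y →
        ((f a < f b → f x < f y) ∧ (f b < f a → f y < f x)) := by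
      intro x hx y hy hxy
      set s := min a x with hs
      set t := max b y with ht
      have hsI : s ∈ I := by rcases min_cases a x with ⟨h, _⟩ | ⟨h, _⟩ <;> rw [hs, h] <;> assumption
      have htI : t ∈ I := by rcases max_cases b y with ⟨h, _⟩ | ⟨h, _⟩ <;> rw [ht, h] <;> assumption
      have hst : s ≤ t := le_trans (min_le_left a x) (le_trans hab.le (le_max_left b y))
      have haM : a ∈ Icc s t := ⟨min_le_left a x, le_trans hab.le (le_max_left b y)⟩
      have hbM : b ∈ Icc s t := ⟨le_trans (min_le_left a x) hab.le, le_max_left b y⟩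
      have hxM : x ∈ Icc s t := ⟨min_le_right a x, le_trans hxy.le (le_max_right b y)⟩
      have hyM : y ∈ Icc s t := ⟨le_trans (min_le_right a x) hxy.le, le_max_right b y⟩
      have hIcc := hsub s t hsI htI
      rcases ContinuousOn.strictMonoOn_of_injOn_Icc' hst (hc.mono hIcc) (hi.mono hIcc) with
        hm | hm
      · exact ⟨fun _ => hm hxM hyM hxy, fun h => absurd (hm haM hbM hab) (by linarith)⟩
      · exact ⟨fun h => absurd (hm haM hbM hab) (by linarith), fun _ => hm hxM hyM hxy⟩
    rcases lt_trichotomy (f a) (f b) with h | h | h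
    · exact Or.inl (fun x hx y hy hxy => (key x hx y hy hxy).1 h)
    · exact absurd (hi ha hb h) hab.ne
    · exact Or.inr (fun x hx y hy hxy => (key x hx y hy hxy).2 h)
  · left
    intro x hx y hy hxy
    exact absurd ⟨x, hx, y, hy, hxy⟩ hex

/-- Right inverse of a strictly increasing map is strictly increasing on positives. -/
lemma inv_mono_gen (P : ℝ → Prop) (g G : ℝ → ℝ)
    (hg : ∀ a b : ℝ, P a → P b → a < b → g a < g b)
    (hGI : ∀ t : ℝ, 0 < t → P (G t)) (hgG : ∀ t : ℝ, 0 < t → g (G t) = t) :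
    ∀ s t : ℝ, 0 < s → s < t → G s < G t := by
  intro s t hs hst
  rcases lt_trichotomy (G s) (G t) with h | h | h
  · exact h
  · exfalso
    have : g (G s) = g (G t) := by rw [h]
    rw [hgG s hs, hgG t (lt_trans hs hst)] at this
    exact hst.ne this
  · exfalso
    have := hg _ _ (hGI t (lt_trans hs hst)) (hGI s hs) h
    rw [hgG s hs, hgG t (lt_trans hs hst)] at this
    linarith

/-- Right inverse of a strictly decreasing map is strictly decreasing on positives. -/
lemma inv_anti_gen (P : ℝ → Prop) (g G : ℝ → ℝ)
    (hg : ∀ a b : ℝ, P a → P b → a < b → g b < g a)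
    (hGI : ∀ t : ℝ, 0 < t → P (G t)) (hgG : ∀ t : ℝ, 0 < t → g (G t) = t) :
    ∀ s t : ℝ, 0 < s → s < t → G t < G s := by
  intro s t hs hst
  rcases lt_trichotomy (G t) (G s) with h | h | h
  · exact h
  · exfalso
    have : g (G s) = g (G t) := by rw [h]
    rw [hgG s hs, hgG t (lt_trans hs hst)] at this
    exact hst.ne this
  · exfalso
    have := hg _ _ (hGI s hs) (hGI t (lt_trans hs hst)) h
    rw [hgG s hs, hgG t (lt_trans hs hst)] at this
    linarith

lemma pexiderK (K : ℝ → ℝ → ℝ) (α₁ α₂ : ℝ) (hα₁ : 0 < α₁) (hα₂ : 0 < α₂)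
    (hstar : ∀ p q r s : ℝ, 0 < p → 0 < q → 0 < r → 0 < s →
      K (α₁*p+α₂*r) (α₁*q+α₂*s) = α₁ * K p q + α₂ * K r s)
    (hmono : ∀ p q q' : ℝ, 0 < p → 0 < q → q < q' → K p q < K p q') :
    ∃ μ : ℝ, 0 < μ ∧ ∀ P Q : ℝ, 0 < P → 0 < Q → K P Q = K P 1 + μ * (Q - 1) := by
  have key : ∀ P Q D ε : ℝ, 0 < ε → 0 < D → α₁*ε < P → α₁*ε < Q →
      K P (Q+D) - K P Q = α₁ * (K ε (ε + D/α₁) - K ε ε) := by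
    intro P Q D ε hε hD hP hQ
    have hr : 0 < (P - α₁*ε)/α₂ := by
      apply div_pos _ hα₂; linarith
    have hs : 0 < (Q - α₁*ε)/α₂ := by
      apply div_pos _ hα₂; linarith
    have hq' : 0 < ε + D/α₁ := by positivity
    have h1 := hstar ε (ε + D/α₁) ((P-α₁*ε)/α₂) ((Q-α₁*ε)/α₂) hε hq' hr hs
    have h2 := hstar ε ε ((P-α₁*ε)/α₂) ((Q-α₁*ε)/α₂) hε hε hr hs
    have e1 : α₁*ε + α₂*((P-α₁*ε)/α₂) = P := by field_simp; ring
    have e2 : α₁*(ε+D/α₁) + α₂*((Q-α₁*ε)/α₂) = Q + D := by field_simp; ring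
    have e3 : α₁*ε + α₂*((Q-α₁*ε)/α₂) = Q := by field_simp; ring
    rw [e1, e2] at h1
    rw [e1, e3] at h2
    linarith
  have hind : ∀ P Q P' Q' D : ℝ, 0 < P → 0 < Q → 0 < P' → 0 < Q' → 0 < D →
      K P (Q+D) - K P Q = K P' (Q'+D) - K P' Q' := by
    intro P Q P' Q' D hP hQ hP' hQ' hD
    set m := min (min P Q) (min P' Q') with hm
    have hm0 : 0 < m := lt_min (lt_min hP hQ) (lt_min hP' hQ')
    set ε := m / (2*α₁) with hε
    have hε0 : 0 < ε := by positivity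
    have hcalc : α₁ * ε = m / 2 := by rw [hε]; field_simp
    have h2 : m / 2 < m := half_lt_self hm0
    have hεP : α₁ * ε < P := by
      have : m ≤ P := le_trans (min_le_left _ _) (min_le_left _ _)
      linarith
    have hεQ : α₁ * ε < Q := by
      have : m ≤ Q := le_trans (min_le_left _ _) (min_le_right _ _)
      linarith
    have hεP' : α₁ * ε < P' := by
      have : m ≤ P' := le_trans (min_le_right _ _) (min_le_left _ _)
      linarith
    have hεQ' : α₁ * ε < Q' := by
      have : m ≤ Q' := le_trans (min_le_right _ _) (min_le_right _ _)
      linarith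
    rw [key P Q D ε hε0 hD hεP hεQ, key P' Q' D ε hε0 hD hεP' hεQ']
  set c : ℝ → ℝ := fun D => K 1 (1+D) - K 1 1 with hc
  have hcK : ∀ P Q D : ℝ, 0 < P → 0 < Q → 0 < D → K P (Q+D) - K P Q = c D := by
    intro P Q D hP hQ hD
    rw [hc]
    exact hind P Q 1 1 D hP hQ one_pos one_pos hD
  have hadd : ∀ x y : ℝ, 0 < x → 0 < y → c (x+y) = c x + c y := by
    intro x y hx hy
    have h1 := hcK 1 (1+x) y one_pos (by linarith) hy
    have h2 := hcK 1 1 x one_pos one_pos hx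
    have h3 : c (x+y) = K 1 (1+(x+y)) - K 1 1 := by rw [hc]
    have harg : 1 + x + y = 1 + (x+y) := by ring
    rw [harg] at h1
    linarith
  have hpos : ∀ x : ℝ, 0 < x → 0 ≤ c x := by
    intro x hx
    have := hmono 1 1 (1+x) one_pos one_pos (by linarith)
    rw [hc]; simp only []
    linarith
  have hlin := cauchy_lin c hadd hpos
  have hc1 : 0 < c 1 := by
    have := hmono 1 1 (1+1) one_pos one_pos (by norm_num)
    rw [hc]; simp only []
    linarith
  refine ⟨c 1, hc1, ?_⟩
  intro P Q hP hQ
  rcases lt_trichotomy Q 1 with h | h | h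
  · have h1 := hcK P Q (1-Q) hP hQ (by linarith)
    have harg : Q + (1-Q) = 1 := by ring
    rw [harg] at h1
    have h2 := hlin (1-Q) (by linarith)
    have h3 : c 1 * (1-Q) = -(c 1 * (Q-1)) := by ring
    linarith
  · rw [h]; ring
  · have h1 := hcK P 1 (Q-1) hP one_pos (by linarith)
    have harg : 1 + (Q-1) = Q := by ring
    rw [harg] at h1
    have h2 := hlin (Q-1) (by linarith)
    linarith

lemma pexiderPhi (φ : ℝ → ℝ) (β₁ β₂ ν μ e : ℝ) (hβ₁ : 0 < β₁) (hβ₂ : 0 < β₂)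
    (hφeq : ∀ a b : ℝ, 0 < a → 0 < b → φ (β₁*a+β₂*b) = ν * φ a + μ * φ b + e)
    (hdich : (∀ s t : ℝ, 0 < s → s < t → φ s < φ t) ∨
             (∀ s t : ℝ, 0 < s → s < t → φ t < φ s)) :
    ∀ t : ℝ, 0 < t → φ t = φ 1 + (φ 2 - φ 1) * (t - 1) := by
  have key : ∀ T Δ ε : ℝ, 0 < ε → 0 < Δ → β₂*ε < T →
      φ (T+Δ) - φ T = μ * (φ (ε + Δ/β₂) - φ ε) := by
    intro T Δ ε hε hΔ hT
    have ha : 0 < (T - β₂*ε)/β₁ := by apply div_pos _ hβ₁; linarith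
    have hb' : 0 < ε + Δ/β₂ := by positivity
    have h1 := hφeq ((T - β₂*ε)/β₁) (ε + Δ/β₂) ha hb'
    have h2 := hφeq ((T - β₂*ε)/β₁) ε ha hε
    have e1 : β₁*((T - β₂*ε)/β₁) + β₂*(ε + Δ/β₂) = T + Δ := by field_simp; ring
    have e2 : β₁*((T - β₂*ε)/β₁) + β₂*ε = T := by field_simp; ring
    rw [e1] at h1
    rw [e2] at h2
    linarith
  have hind : ∀ T T' Δ : ℝ, 0 < T → 0 < T' → 0 < Δ →
      φ (T+Δ) - φ T = φ (T'+Δ) - φ T' := by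
    intro T T' Δ hT hT' hΔ
    set m := min T T' with hm
    have hm0 : 0 < m := lt_min hT hT'
    set ε := m / (2*β₂) with hε
    have hε0 : 0 < ε := by positivity
    have hcalc : β₂ * ε = m / 2 := by rw [hε]; field_simp
    have h2 : m / 2 < m := half_lt_self hm0
    have hεT : β₂ * ε < T := by
      have : m ≤ T := min_le_left _ _
      linarith
    have hεT' : β₂ * ε < T' := by
      have : m ≤ T' := min_le_right _ _
      linarith
    rw [key T Δ ε hε0 hΔ hεT, key T' Δ ε hε0 hΔ hεT']
  set d : ℝ → ℝ := fun Δ => φ (1+Δ) - φ 1 with hd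
  have hdT : ∀ T Δ : ℝ, 0 < T → 0 < Δ → φ (T+Δ) - φ T = d Δ := by
    intro T Δ hT hΔ
    rw [hd]
    exact hind T 1 Δ hT one_pos hΔ
  have hadd : ∀ x y : ℝ, 0 < x → 0 < y → d (x+y) = d x + d y := by
    intro x y hx hy
    have h1 := hdT (1+x) y (by linarith) hy
    have h2 := hdT 1 x one_pos hx
    have h3 : d (x+y) = φ (1+(x+y)) - φ 1 := by rw [hd]
    have harg : 1 + x + y = 1 + (x+y) := by ring
    rw [harg] at h1
    linarith
  have hdlin : ∀ Δ : ℝ, 0 < Δ → d Δ = d 1 * Δ := by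
    rcases hdich with hmono | hanti
    · have hpos : ∀ x : ℝ, 0 < x → 0 ≤ d x := by
        intro x hx
        have := hmono 1 (1+x) one_pos (by linarith)
        rw [hd]; simp only []
        linarith
      exact cauchy_lin d hadd hpos
    · have hpos : ∀ x : ℝ, 0 < x → 0 ≤ -(d x) := by
        intro x hx
        have := hanti 1 (1+x) one_pos (by linarith)
        rw [hd]; simp only []
        linarith
      have h := cauchy_lin (fun Δ => -(d Δ))
        (by intro x y hx hy; rw [hadd x y hx hy]; ring) hpos
      intro Δ hΔ
      have := h Δ hΔ
      linarith
  have hd1 : d 1 = φ 2 - φ 1 := by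
    rw [hd]; norm_num
  intro t ht
  rcases lt_trichotomy t 1 with h | h | h
  · have h1 := hdT t (1-t) ht (by linarith)
    have harg : t + (1-t) = 1 := by ring
    rw [harg] at h1
    have h2 := hdlin (1-t) (by linarith)
    rw [hd1] at h2
    have h3 : (φ 2 - φ 1) * (1-t) = -((φ 2 - φ 1) * (t-1)) := by ring
    linarith
  · rw [h]; ring
  · have h1 := hdT 1 (t-1) one_pos (by linarith)
    have harg : 1 + (t-1) = t := by ring
    rw [harg] at h1
    have h2 := hdlin (t-1) (by linarith)
    rw [hd1] at h2
    linarith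


theorem stmt_9 (I : Set ℝ) (hI : I.Nonempty) (hIordconn : I.OrdConnected)
    (f g F G : ℝ → ℝ) (α₁ α₂ β₁ β₂ : ℝ)
    (hα₁ : 0 < α₁) (hα₂ : 0 < α₂) (hβ₁ : 0 < β₁) (hβ₂ : 0 < β₂)
    (hfbij : Set.BijOn f I (Set.Ioi (0:ℝ))) (hfcont : ContinuousOn f I)
    (hgbij : Set.BijOn g I (Set.Ioi (0:ℝ))) (hgcont : ContinuousOn g I)
    (hFf : ∀ x ∈ I, F (f x) = x) (hfF : ∀ t : ℝ, 0 < t → f (F t) = t)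
    (hGg : ∀ x ∈ I, G (g x) = x) (hgG : ∀ t : ℝ, 0 < t → g (G t) = t)
    (heq : ∀ x ∈ I, ∀ y ∈ I, ∀ z ∈ I, ∀ w ∈ I,
      F (α₁ * f (G (β₁ * g x + β₂ * g y)) + α₂ * f (G (β₁ * g z + β₂ * g w))) =
      G (β₁ * g (F (α₁ * f x + α₂ * f z)) + β₂ * g (F (α₁ * f y + α₂ * f w)))) :
    ∃ c : ℝ, 0 < c ∧ ∀ x ∈ I, f x = c * g x := by
  have hfpos : ∀ x ∈ I, 0 < f x := fun x hx => Set.mem_Ioi.mp (hfbij.1 hx)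
  have hgpos : ∀ x ∈ I, 0 < g x := fun x hx => Set.mem_Ioi.mp (hgbij.1 hx)
  have hFI : ∀ t : ℝ, 0 < t → F t ∈ I := by
    intro t ht
    obtain ⟨x, hx, hfx⟩ := hfbij.2.2 (Set.mem_Ioi.mpr ht)
    rw [← hfx, hFf x hx]; exact hx
  have hGI : ∀ t : ℝ, 0 < t → G t ∈ I := by
    intro t ht
    obtain ⟨x, hx, hgx⟩ := hgbij.2.2 (Set.mem_Ioi.mpr ht)
    rw [← hgx, hGg x hx]; exact hx
  set φ : ℝ → ℝ := fun t => f (G t) with hφdef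
  set χ : ℝ → ℝ := fun t => g (F t) with hχdef
  have hφpos : ∀ t : ℝ, 0 < t → 0 < φ t := fun t ht => hfpos _ (hGI t ht)
  have hχpos : ∀ t : ℝ, 0 < t → 0 < χ t := fun t ht => hgpos _ (hFI t ht)
  have hχφ : ∀ t : ℝ, 0 < t → χ (φ t) = t := by
    intro t ht
    show g (F (f (G t))) = t
    rw [hFf _ (hGI t ht), hgG t ht]
  have hφχ : ∀ t : ℝ, 0 < t → φ (χ t) = t := by
    intro t ht
    show f (G (g (F t))) = t
    rw [hGg _ (hFI t ht), hfF t ht]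
  set K : ℝ → ℝ → ℝ := fun p q => φ (β₁ * χ p + β₂ * χ q) with hKdef
  have hargpos : ∀ p q : ℝ, 0 < p → 0 < q → 0 < β₁ * χ p + β₂ * χ q := by
    intro p q hp hq
    exact add_pos (mul_pos hβ₁ (hχpos p hp)) (mul_pos hβ₂ (hχpos q hq))
  -- the key functional equation for K
  have hstar : ∀ p q r s : ℝ, 0 < p → 0 < q → 0 < r → 0 < s →
      K (α₁*p+α₂*r) (α₁*q+α₂*s) = α₁ * K p q + α₂ * K r s := by
    intro p q r s hp hq hr hs
    have H := heq (F p) (hFI p hp) (F q) (hFI q hq) (F r) (hFI r hr) (F s) (hFI s hs)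
    rw [hfF p hp, hfF q hq, hfF r hr, hfF s hs] at H
    have hX : 0 < β₁ * g (F p) + β₂ * g (F q) :=
      add_pos (mul_pos hβ₁ (hgpos _ (hFI p hp))) (mul_pos hβ₂ (hgpos _ (hFI q hq)))
    have hY : 0 < β₁ * g (F r) + β₂ * g (F s) :=
      add_pos (mul_pos hβ₁ (hgpos _ (hFI r hr))) (mul_pos hβ₂ (hgpos _ (hFI s hs)))
    have hL : 0 < α₁ * f (G (β₁ * g (F p) + β₂ * g (F q)))
        + α₂ * f (G (β₁ * g (F r) + β₂ * g (F s))) :=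
      add_pos (mul_pos hα₁ (hfpos _ (hGI _ hX))) (mul_pos hα₂ (hfpos _ (hGI _ hY)))
    have H2 := congrArg f H
    rw [hfF _ hL] at H2
    simp only [hKdef, hχdef, hφdef]
    exact H2.symm
  -- monotonicity
  have hfd := dichotomy I hIordconn f hfcont hfbij.2.1
  have hgd := dichotomy I hIordconn g hgcont hgbij.2.1
  have hφdich : (∀ s t : ℝ, 0 < s → s < t → φ s < φ t) ∨
      (∀ s t : ℝ, 0 < s → s < t → φ t < φ s) := by
    rcases hfd with hf | hf <;> rcases hgd with hg | hg
    · left; intro s t hs hst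
      have hG := inv_mono_gen (· ∈ I) g G (fun a b ha hb hab => hg ha hb hab) hGI hgG s t hs hst
      exact hf (hGI s hs) (hGI t (hs.trans hst)) hG
    · right; intro s t hs hst
      have hG := inv_anti_gen (· ∈ I) g G (fun a b ha hb hab => hg ha hb hab) hGI hgG s t hs hst
      exact hf (hGI t (hs.trans hst)) (hGI s hs) hG
    · right; intro s t hs hst
      have hG := inv_mono_gen (· ∈ I) g G (fun a b ha hb hab => hg ha hb hab) hGI hgG s t hs hst
      exact hf (hGI s hs) (hGI t (hs.trans hst)) hG
    · left; intro s t hs hst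
      have hG := inv_anti_gen (· ∈ I) g G (fun a b ha hb hab => hg ha hb hab) hGI hgG s t hs hst
      exact hf (hGI t (hs.trans hst)) (hGI s hs) hG
  have hKmono2 : ∀ p q q' : ℝ, 0 < p → 0 < q → q < q' → K p q < K p q' := by
    intro p q q' hp hq hqq'
    have hq' : 0 < q' := hq.trans hqq'
    simp only [hKdef]
    rcases hφdich with hm | hm
    · have hχm := inv_mono_gen (0 < ·) φ χ (fun a b ha _ hab => hm a b ha hab)
        hχpos hφχ q q' hq hqq'
      have harg : β₁ * χ p + β₂ * χ q < β₁ * χ p + β₂ * χ q' := by nlinarith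
      exact hm _ _ (hargpos p q hp hq) harg
    · have hχa := inv_anti_gen (0 < ·) φ χ (fun a b ha _ hab => hm a b ha hab)
        hχpos hφχ q q' hq hqq'
      have harg : β₁ * χ p + β₂ * χ q' < β₁ * χ p + β₂ * χ q := by nlinarith
      exact hm _ _ (hargpos p q' hp hq') harg
  have hKmono1 : ∀ q p p' : ℝ, 0 < q → 0 < p → p < p' → K p q < K p' q := by
    intro q p p' hq hp hpp'
    have hp' : 0 < p' := hp.trans hpp'
    simp only [hKdef]
    rcases hφdich with hm | hm
    · have hχm := inv_mono_gen (0 < ·) φ χ (fun a b ha _ hab => hm a b ha hab)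
        hχpos hφχ p p' hp hpp'
      have harg : β₁ * χ p + β₂ * χ q < β₁ * χ p' + β₂ * χ q := by nlinarith
      exact hm _ _ (hargpos p q hp hq) harg
    · have hχa := inv_anti_gen (0 < ·) φ χ (fun a b ha _ hab => hm a b ha hab)
        hχpos hφχ p p' hp hpp'
      have harg : β₁ * χ p' + β₂ * χ q < β₁ * χ p + β₂ * χ q := by nlinarith
      exact hm _ _ (hargpos p' q hp' hq) harg
  obtain ⟨μ, hμ, hKQ⟩ := pexiderK K α₁ α₂ hα₁ hα₂ hstar hKmono2
  obtain ⟨ν, hν, hKP'⟩ := pexiderK (fun p q => K q p) α₁ α₂ hα₁ hα₂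
    (by intro p q r s hp hq hr hs; simpa using hstar q p s r hq hp hs hr)
    (by intro p q q' hp hq hqq'; simpa using hKmono1 p q q' hp hq hqq')
  have hKrep : ∀ P Q : ℝ, 0 < P → 0 < Q → K P Q = K 1 1 + ν*(P-1) + μ*(Q-1) := by
    intro P Q hP hQ
    have h1 := hKQ P Q hP hQ
    have h2 := hKP' 1 P one_pos hP
    linarith
  have hφeq : ∀ a b : ℝ, 0 < a → 0 < b →
      φ (β₁*a+β₂*b) = ν * φ a + μ * φ b + (K 1 1 - ν - μ) := by
    intro a b ha hb
    have h1 : K (φ a) (φ b) = φ (β₁*a+β₂*b) := by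
      simp only [hKdef]
      rw [hχφ a ha, hχφ b hb]
    have h2 := hKrep (φ a) (φ b) (hφpos a ha) (hφpos b hb)
    rw [h1] at h2
    rw [h2]; ring
  have hφlin := pexiderPhi φ β₁ β₂ ν μ (K 1 1 - ν - μ) hβ₁ hβ₂ hφeq hφdich
  set lam : ℝ := φ 2 - φ 1 with hlam
  set kap : ℝ := φ 1 - lam with hkap
  have hφt : ∀ t : ℝ, 0 < t → φ t = lam * t + kap := by
    intro t ht
    rw [hφlin t ht, hkap, hlam]; ring
  have h12 : φ 1 ≠ φ 2 := by
    rcases hφdich with hm | hm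
    · exact ne_of_lt (hm 1 2 one_pos one_lt_two)
    · exact ne_of_gt (hm 1 2 one_pos one_lt_two)
  have hlamne : lam ≠ 0 := by
    rw [hlam]; exact sub_ne_zero_of_ne (Ne.symm h12)
  have hlampos : 0 < lam := by
    by_contra h
    push_neg at h
    have hlt : lam < 0 := lt_of_le_of_ne h hlamne
    set t0 : ℝ := max 1 (kap / (-lam)) + 1 with ht0
    have ht0pos : 0 < t0 := by
      have : (1:ℝ) ≤ max 1 (kap / (-lam)) := le_max_left _ _
      rw [ht0]; linarith
    have hgt : kap / (-lam) < t0 := by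
      have := le_max_right 1 (kap / (-lam))
      rw [ht0]; linarith
    have hmul : lam * t0 < lam * (kap / (-lam)) := by
      exact mul_lt_mul_of_neg_left hgt hlt
    have hfe : lam * (kap / (-lam)) = -kap := by
      rw [mul_div_assoc', div_neg, mul_div_cancel_left₀ _ hlamne]
    have hp := hφpos t0 ht0pos
    rw [hφt t0 ht0pos] at hp
    rw [hfe] at hmul
    linarith
  have hkap0 : kap = 0 := by
    rcases lt_trichotomy kap 0 with h | h | h
    · exfalso
      set t0 : ℝ := -kap/(2*lam) with ht0
      have ht0pos : 0 < t0 := by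
        rw [ht0]; exact div_pos (by linarith) (by positivity)
      have hp := hφpos t0 ht0pos
      rw [hφt t0 ht0pos] at hp
      have hfe : lam * (-kap/(2*lam)) = -kap/2 := by field_simp
      rw [ht0] at hp
      linarith
    · exact h
    · exfalso
      have hu : 0 < kap/2 := by linarith
      have ht : 0 < χ (kap/2) := hχpos _ hu
      have h1 := hφχ (kap/2) hu
      rw [hφt _ ht] at h1
      nlinarith [mul_pos hlampos ht]
  refine ⟨lam, hlampos, ?_⟩
  intro x hx
  have hgx : 0 < g x := hgpos x hx
  have h1 : φ (g x) = f x := by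
    simp only [hφdef]
    rw [hGg x hx]
  have h2 := hφt (g x) hgx
  rw [h1] at h2
  rw [h2, hkap0]; ring
end

section
/- Let (X, ℒ, λ) and (Y, ℳ, μ) be finite measure spaces, each admitting a measurable set of measure strictly between 0 and the total measure, let I ⊆ ℝ be a nonempty interval, and let f, g : I → ℝ⁺ be continuous bijections. Then the equation f⁻¹(∫_X f(g⁻¹(∫_Y g∘h dμ)) dλ) = g⁻¹(∫_Y g(f⁻¹(∫_X f∘h dλ)) dμ) holds for every (ℒ⊗ℳ)-measurable simple function h : X × Y → I if and only if there exists c > 0 with f = c·g. -/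
open MeasureTheory Set
open scoped Classical

section FEhelpers

lemma lin_of_add (N : ℝ → ℝ) (hadd : ∀ a b, N (a + b) = N a + N b) (hc : Continuous N) :
    ∀ x, N x = N 1 * x := by
  intro x
  let Fh : ℝ →+ ℝ := AddMonoidHom.mk' N hadd
  have hs := (Fh.toRealLinearMap hc).map_smul x 1
  simp only [AddMonoidHom.coe_toRealLinearMap, smul_eq_mul, mul_one] at hs
  have h0 : Fh x = N x := rfl
  have h1 : Fh 1 = N 1 := rfl
  change N x = x * N 1 at hs
  rw [hs, mul_comm]

lemma affine_of_translation (ρ : ℝ → ℝ) (hc : ContinuousOn ρ (Set.Ioi 0))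
    (ht : ∀ x x' d : ℝ, 0 < x → 0 < x' → 0 < d → ρ (x + d) - ρ x = ρ (x' + d) - ρ x') :
    ∃ k e : ℝ, ∀ x, 0 < x → ρ x = k * x + e := by
  have ht' : ∀ x x' d : ℝ, 0 < x → 0 < x' → 0 < x + d → 0 < x' + d →
      ρ (x + d) - ρ x = ρ (x' + d) - ρ x' := by
    intro x x' d hx hx' hxd hx'd
    rcases lt_trichotomy d 0 with hd | hd | hd
    · have h := ht (x + d) (x' + d) (-d) hxd hx'd (by linarith)
      have e1 : x + d + -d = x := by ring
      have e2 : x' + d + -d = x' := by ring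
      rw [e1, e2] at h; linarith
    · simp [hd]
    · exact ht x x' d hx hx' hd
  set N : ℝ → ℝ := fun d => ρ (2 * |d| + 1 + d) - ρ (2 * |d| + 1) with hN
  have hpos1 : ∀ d : ℝ, (0:ℝ) < 2 * |d| + 1 := fun d => by positivity
  have hpos2 : ∀ d : ℝ, (0:ℝ) < 2 * |d| + 1 + d := fun d => by
    have := abs_nonneg d; have := neg_abs_le d; linarith
  have hNeq : ∀ x d : ℝ, 0 < x → 0 < x + d → N d = ρ (x + d) - ρ x := by
    intro x d hx hxd
    exact (ht' x (2 * |d| + 1) d hx (hpos1 d) hxd (hpos2 d)).symm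
  have hadd : ∀ a b, N (a + b) = N a + N b := by
    intro a b
    set x : ℝ := 2 * |a| + 2 * |b| + 1 with hx
    have hxpos : 0 < x := by positivity
    have hxa : 0 < x + a := by
      have := neg_abs_le a; have := abs_nonneg b; simp only [hx]; linarith
    have hxab : 0 < x + (a + b) := by
      have := neg_abs_le a; have := neg_abs_le b; simp only [hx]; linarith
    have h1 : N (a + b) = ρ (x + (a + b)) - ρ x := hNeq x (a + b) hxpos hxab
    have h2 : N a = ρ (x + a) - ρ x := hNeq x a hxpos hxa
    have h3 : N b = ρ (x + a + b) - ρ (x + a) := hNeq (x + a) b hxa (by linarith)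
    have e : x + (a + b) = x + a + b := by ring
    rw [h1, h2, h3, e]; ring
  have hcN : Continuous N := by
    have c1 : Continuous fun d : ℝ => 2 * |d| + 1 + d := by continuity
    have c2 : Continuous fun d : ℝ => 2 * |d| + 1 := by continuity
    exact (hc.comp_continuous c1 fun d => hpos2 d).sub
      (hc.comp_continuous c2 fun d => hpos1 d)
  refine ⟨N 1, ρ 1 - N 1, fun x hx => ?_⟩
  have h := hNeq 1 (x - 1) one_pos (by linarith)
  have e1 : 1 + (x - 1) = x := by ring
  rw [e1] at h
  have hlin := lin_of_add N hadd hcN (x - 1)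
  rw [hlin] at h
  linarith

lemma affine_of_jensen (ρ : ℝ → ℝ) {β β' : ℝ} (hβ : 0 < β) (hβ' : 0 < β')
    (hc : ContinuousOn ρ (Set.Ioi 0))
    (heq : ∀ a b : ℝ, 0 < a → 0 < b → ρ (a * β + b * β') = ρ a * β + ρ b * β') :
    ∃ k e : ℝ, ∀ x, 0 < x → ρ x = k * x + e := by
  apply affine_of_translation ρ hc
  intro x x' d hx hx' hd
  have key : ∀ u : ℝ, 0 < u →
      ρ (u + d) - ρ u = (ρ ((d * β + 1) / β') - ρ (1 / β')) * β' / β := by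
    intro u hu
    have h1 := heq u ((d * β + 1) / β') hu (by positivity)
    have h2 := heq (u + d) (1 / β') (by linarith) (by positivity)
    have e1 : u * β + (d * β + 1) / β' * β' = u * β + (d * β + 1) := by field_simp
    have e2 : (u + d) * β + 1 / β' * β' = u * β + (d * β + 1) := by field_simp; ring
    rw [e1] at h1
    rw [e2] at h2
    rw [h2] at h1
    field_simp
    linarith
  rw [key x hx, key x' hx']

lemma integral_ite {A : Type*} [MeasurableSpace A] (ν : Measure A) [IsFiniteMeasure ν]
    {B : Set A} (hB : MeasurableSet B) (c₁ c₂ : ℝ) :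
    ∫ y, (if y ∈ B then c₁ else c₂) ∂ν = c₁ * (ν B).toReal + c₂ * (ν Bᶜ).toReal := by
  have hrw : (fun y => if y ∈ B then c₁ else c₂) =
      fun y => Set.indicator B (fun _ => c₁) y + Set.indicator Bᶜ (fun _ => c₂) y := by
    funext y
    by_cases hy : y ∈ B <;> simp [Set.indicator, hy]
  rw [hrw, integral_add ((integrable_const c₁).indicator hB)
    ((integrable_const c₂).indicator hB.compl),
    integral_indicator_const _ hB, integral_indicator_const _ hB.compl]
  simp [mul_comm]
  rfl

lemma mono_or_anti {I : Set ℝ} (hIo : I.OrdConnected) {f : ℝ → ℝ}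
    (hc : ContinuousOn f I) (hi : Set.InjOn f I) :
    StrictMonoOn f I ∨ StrictAntiOn f I := by
  by_cases h2 : ∃ x ∈ I, ∃ y ∈ I, x < y
  swap
  · left; intro x hx y hy hxy; exact absurd ⟨x, hx, y, hy, hxy⟩ h2
  obtain ⟨x₀, hx₀, y₀, hy₀, hxy₀⟩ := h2
  have key : ∀ x ∈ I, ∀ y ∈ I, x < y → (f x < f y ↔ f x₀ < f y₀) := by
    intro x hx y hy hxy
    set p := min x x₀ with hp
    set q := max y y₀ with hq
    have hpI : p ∈ I := by rcases min_cases x x₀ with ⟨h, _⟩ | ⟨h, _⟩ <;> rw [hp, h] <;> assumption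
    have hqI : q ∈ I := by rcases max_cases y y₀ with ⟨h, _⟩ | ⟨h, _⟩ <;> rw [hq, h] <;> assumption
    have hsub : Icc p q ⊆ I := hIo.out hpI hqI
    have hpq : p ≤ q := le_trans (le_trans (min_le_left x x₀) hxy.le) (le_max_left y y₀)
    have hxm : x ∈ Icc p q := ⟨min_le_left x x₀, le_trans hxy.le (le_max_left y y₀)⟩
    have hym : y ∈ Icc p q := ⟨le_trans (min_le_left x x₀) hxy.le, le_max_left y y₀⟩
    have hx0m : x₀ ∈ Icc p q := ⟨min_le_right x x₀, le_trans hxy₀.le (le_max_right y y₀)⟩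
    have hy0m : y₀ ∈ Icc p q := ⟨le_trans (min_le_right x x₀) hxy₀.le, le_max_right y y₀⟩
    rcases ContinuousOn.strictMonoOn_of_injOn_Icc' hpq (hc.mono hsub) (hi.mono hsub) with hm | ha
    · exact iff_of_true (hm hxm hym hxy) (hm hx0m hy0m hxy₀)
    · exact iff_of_false (lt_asymm (ha hxm hym hxy)) (lt_asymm (ha hx0m hy0m hxy₀))
  rcases lt_or_ge (f x₀) (f y₀) with hdir | hdir
  · left; intro x hx y hy hxy; exact (key x hx y hy hxy).2 hdir
  · right; intro x hx y hy hxy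
    have hne : f y ≠ f x := fun hfe => absurd (hi hy hx hfe) (ne_of_gt hxy)
    have hnlt : ¬ f x < f y := by
      intro hlt
      exact absurd ((key x hx y hy hxy).1 hlt) (not_lt.2 hdir)
    exact lt_of_le_of_ne (not_lt.1 hnlt) hne

lemma contOn_of_mono (φ : ℝ → ℝ) (h : StrictMonoOn φ (Set.Ioi 0) ∨ StrictAntiOn φ (Set.Ioi 0))
    (himg : ∀ u : ℝ, 0 < u → 0 < φ u) (hsurj : ∀ v : ℝ, 0 < v → ∃ u, 0 < u ∧ φ u = v) :
    ContinuousOn φ (Set.Ioi 0) := by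
  have himage : φ '' Set.Ioi 0 = Set.Ioi 0 := by
    apply subset_antisymm
    · rintro _ ⟨u, hu, rfl⟩; exact himg u hu
    · intro v hv; obtain ⟨u, hu, he⟩ := hsurj v hv; exact ⟨u, hu, he⟩
  rcases h with hm | ha
  · intro a ha'
    exact (hm.continuousAt_of_image_mem_nhds (isOpen_Ioi.mem_nhds ha')
      (by rw [himage]; exact isOpen_Ioi.mem_nhds (himg a ha'))).continuousWithinAt
  · intro a ha'
    have hm' : StrictMonoOn (fun u => -φ u) (Set.Ioi 0) :=
      fun u hu v hv huv => neg_lt_neg (ha hu hv huv)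
    have himage' : (fun u => -φ u) '' Set.Ioi 0 = Set.Iio 0 := by
      have h0 : (fun u => -φ u) '' Set.Ioi 0 = Neg.neg '' (φ '' Set.Ioi 0) := by
        rw [← Set.image_comp]; rfl
      rw [h0, himage]
      ext z; simp only [Set.mem_image, Set.mem_Ioi, Set.mem_Iio]
      constructor
      · rintro ⟨w, hw, rfl⟩; linarith
      · intro hz; exact ⟨-z, by linarith, by ring⟩
    have hcn : ContinuousAt (fun u => -φ u) a :=
      hm'.continuousAt_of_image_mem_nhds (isOpen_Ioi.mem_nhds ha')
        (by rw [himage']; exact isOpen_Iio.mem_nhds (by simpa using himg a ha'))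
    have hfin : ContinuousAt φ a := by
      have := hcn.neg
      simpa only [Pi.neg_def, neg_neg] using this
    exact hfin.continuousWithinAt

end FEhelpers

set_option maxHeartbeats 1000000 in
theorem stmt_14 {X Y : Type*} [MeasurableSpace X] [MeasurableSpace Y]
    (lam : Measure X) (mu : Measure Y)
    [IsFiniteMeasure lam] [IsFiniteMeasure mu]
    (hX : ∃ A : Set X, MeasurableSet A ∧ 0 < lam A ∧ lam A < lam Set.univ)
    (hY : ∃ B : Set Y, MeasurableSet B ∧ 0 < mu B ∧ mu B < mu Set.univ)
    (I : Set ℝ) (hI : I.Nonempty) (hIordconn : I.OrdConnected)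
    (f g F G : ℝ → ℝ)
    (hfbij : Set.BijOn f I (Set.Ioi (0:ℝ))) (hfcont : ContinuousOn f I)
    (hgbij : Set.BijOn g I (Set.Ioi (0:ℝ))) (hgcont : ContinuousOn g I)
    (hFf : ∀ x ∈ I, F (f x) = x) (hfF : ∀ t : ℝ, 0 < t → f (F t) = t)
    (hGg : ∀ x ∈ I, G (g x) = x) (hgG : ∀ t : ℝ, 0 < t → g (G t) = t) :
    (∀ h : SimpleFunc (X × Y) ℝ, (∀ p : X × Y, h p ∈ I) →
      F (∫ x, f (G (∫ y, g (h (x, y)) ∂mu)) ∂lam) =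
        G (∫ y, g (F (∫ x, f (h (x, y)) ∂lam)) ∂mu)) ↔
    ∃ c : ℝ, 0 < c ∧ ∀ t ∈ I, f t = c * g t := by
  obtain ⟨A, hA, hA0, hAu⟩ := hX
  obtain ⟨B, hB, hB0, hBu⟩ := hY
  set α : ℝ := (lam A).toReal with hαdef
  set α' : ℝ := (lam Aᶜ).toReal with hα'def
  set β : ℝ := (mu B).toReal with hβdef
  set β' : ℝ := (mu Bᶜ).toReal with hβ'def
  have hα : 0 < α := ENNReal.toReal_pos (ne_of_gt hA0) (measure_ne_top lam A)
  have hAc : 0 < lam Aᶜ := by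
    rw [measure_compl hA (measure_ne_top lam A)]
    exact tsub_pos_of_lt hAu
  have hα' : 0 < α' := ENNReal.toReal_pos (ne_of_gt hAc) (measure_ne_top lam Aᶜ)
  have hβ : 0 < β := ENNReal.toReal_pos (ne_of_gt hB0) (measure_ne_top mu B)
  have hBc : 0 < mu Bᶜ := by
    rw [measure_compl hB (measure_ne_top mu B)]
    exact tsub_pos_of_lt hBu
  have hβ' : 0 < β' := ENNReal.toReal_pos (ne_of_gt hBc) (measure_ne_top mu Bᶜ)
  -- basic facts about the inverses
  have hFI : ∀ v : ℝ, 0 < v → F v ∈ I := by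
    intro v hv
    obtain ⟨x, hxI, hxv⟩ := hfbij.surjOn (Set.mem_Ioi.2 hv)
    rw [← hxv, hFf x hxI]; exact hxI
  have hGI : ∀ v : ℝ, 0 < v → G v ∈ I := by
    intro v hv
    obtain ⟨x, hxI, hxv⟩ := hgbij.surjOn (Set.mem_Ioi.2 hv)
    rw [← hxv, hGg x hxI]; exact hxI
  set φ : ℝ → ℝ := fun u => f (G u) with hφdef
  set ψ : ℝ → ℝ := fun v => g (F v) with hψdef
  have hφpos : ∀ u : ℝ, 0 < u → 0 < φ u := fun u hu => hfbij.mapsTo (hGI u hu)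
  have hψpos : ∀ u : ℝ, 0 < u → 0 < ψ u := fun u hu => hgbij.mapsTo (hFI u hu)
  have hψφ : ∀ u : ℝ, 0 < u → ψ (φ u) = u := by
    intro u hu
    show g (F (f (G u))) = u
    rw [hFf _ (hGI u hu), hgG u hu]
  have hφψ : ∀ v : ℝ, 0 < v → φ (ψ v) = v := by
    intro v hv
    show f (G (g (F v))) = v
    rw [hGg _ (hFI v hv), hfF v hv]
  have hφinj : ∀ u v : ℝ, 0 < u → 0 < v → φ u = φ v → u = v := by
    intro u v hu hv he
    have h0 := hψφ u hu
    rw [he, hψφ v hv] at h0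
    exact h0.symm
  have hφsurj : ∀ v : ℝ, 0 < v → ∃ u, 0 < u ∧ φ u = v :=
    fun v hv => ⟨ψ v, hψpos v hv, hφψ v hv⟩
  have hψsurj : ∀ v : ℝ, 0 < v → ∃ u, 0 < u ∧ ψ u = v :=
    fun v hv => ⟨φ v, hφpos v hv, hψφ v hv⟩
  -- monotonicity and continuity of φ and ψ
  have hfm := mono_or_anti hIordconn hfcont hfbij.injOn
  have hgm := mono_or_anti hIordconn hgcont hgbij.injOn
  have hGmono : StrictMonoOn g I → StrictMonoOn G (Set.Ioi 0) := by
    intro hg u hu v hv huv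
    by_contra hle
    push_neg at hle
    have h0 : g (G v) ≤ g (G u) := hg.monotoneOn (hGI v hv) (hGI u hu) hle
    rw [hgG v hv, hgG u hu] at h0
    exact absurd huv (not_lt.2 h0)
  have hGanti : StrictAntiOn g I → StrictAntiOn G (Set.Ioi 0) := by
    intro hg u hu v hv huv
    by_contra hle
    push_neg at hle
    have h0 : g (G v) ≤ g (G u) := hg.antitoneOn (hGI u hu) (hGI v hv) hle
    rw [hgG v hv, hgG u hu] at h0
    exact absurd huv (not_lt.2 h0)
  have hFmono : StrictMonoOn f I → StrictMonoOn F (Set.Ioi 0) := by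
    intro hf u hu v hv huv
    by_contra hle
    push_neg at hle
    have h0 : f (F v) ≤ f (F u) := hf.monotoneOn (hFI v hv) (hFI u hu) hle
    rw [hfF v hv, hfF u hu] at h0
    exact absurd huv (not_lt.2 h0)
  have hFanti : StrictAntiOn f I → StrictAntiOn F (Set.Ioi 0) := by
    intro hf u hu v hv huv
    by_contra hle
    push_neg at hle
    have h0 : f (F v) ≤ f (F u) := hf.antitoneOn (hFI u hu) (hFI v hv) hle
    rw [hfF v hv, hfF u hu] at h0
    exact absurd huv (not_lt.2 h0)
  have hφm : StrictMonoOn φ (Set.Ioi 0) ∨ StrictAntiOn φ (Set.Ioi 0) := by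
    rcases hfm with hf1 | hf1 <;> rcases hgm with hg1 | hg1
    · left; intro u hu v hv huv; exact hf1 (hGI u hu) (hGI v hv) (hGmono hg1 hu hv huv)
    · right; intro u hu v hv huv; exact hf1 (hGI v hv) (hGI u hu) (hGanti hg1 hu hv huv)
    · right; intro u hu v hv huv; exact hf1 (hGI u hu) (hGI v hv) (hGmono hg1 hu hv huv)
    · left; intro u hu v hv huv; exact hf1 (hGI v hv) (hGI u hu) (hGanti hg1 hu hv huv)
  have hψm : StrictMonoOn ψ (Set.Ioi 0) ∨ StrictAntiOn ψ (Set.Ioi 0) := by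
    rcases hgm with hg1 | hg1 <;> rcases hfm with hf1 | hf1
    · left; intro u hu v hv huv; exact hg1 (hFI u hu) (hFI v hv) (hFmono hf1 hu hv huv)
    · right; intro u hu v hv huv; exact hg1 (hFI v hv) (hFI u hu) (hFanti hf1 hu hv huv)
    · right; intro u hu v hv huv; exact hg1 (hFI u hu) (hFI v hv) (hFmono hf1 hu hv huv)
    · left; intro u hu v hv huv; exact hg1 (hFI v hv) (hFI u hu) (hFanti hf1 hu hv huv)
  have hφcont : ContinuousOn φ (Set.Ioi 0) := contOn_of_mono φ hφm hφpos hφsurj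
  have hψcont : ContinuousOn ψ (Set.Ioi 0) := contOn_of_mono ψ hψm hψpos hψsurj
  constructor
  · intro hEq
    have hSA : MeasurableSet (Prod.fst ⁻¹' A : Set (X × Y)) := hA.preimage measurable_fst
    have hSB : MeasurableSet (Prod.snd ⁻¹' B : Set (X × Y)) := hB.preimage measurable_snd
    set Φ : ℝ → ℝ → ℝ := fun x y => ψ (φ x * α + φ y * α') with hΦdef
    have hΦpos : ∀ x y : ℝ, 0 < x → 0 < y → 0 < Φ x y := by
      intro x y hx hy
      have h1 := hφpos x hx
      have h2 := hφpos y hy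
      exact hψpos _ (by positivity)
    have hφΦ : ∀ x y : ℝ, 0 < x → 0 < y → φ (Φ x y) = φ x * α + φ y * α' := by
      intro x y hx hy
      have h1 := hφpos x hx
      have h2 := hφpos y hy
      exact hφψ _ (by positivity)
    have hstar : ∀ p q r s : ℝ, 0 < p → 0 < q → 0 < r → 0 < s →
        φ (p * β + q * β') * α + φ (r * β + s * β') * α' =
          φ (Φ p r * β + Φ q s * β') := by
      intro p q r s hp hq hr hs
      set a := G p with hadef
      set b := G q with hbdef
      set cc := G r with hccdef
      set dd := G s with hdddef
      have haI : a ∈ I := hGI p hp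
      have hbI : b ∈ I := hGI q hq
      have hccI : cc ∈ I := hGI r hr
      have hddI : dd ∈ I := hGI s hs
      have hga : g a = p := hgG p hp
      have hgb : g b = q := hgG q hq
      have hgcc : g cc = r := hgG r hr
      have hgdd : g dd = s := hgG s hs
      set hh : SimpleFunc (X × Y) ℝ :=
        SimpleFunc.piecewise (Prod.snd ⁻¹' B) hSB
          (SimpleFunc.piecewise (Prod.fst ⁻¹' A) hSA
            (SimpleFunc.const _ a) (SimpleFunc.const _ cc))
          (SimpleFunc.piecewise (Prod.fst ⁻¹' A) hSA
            (SimpleFunc.const _ b) (SimpleFunc.const _ dd)) with hhdef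
      have happ : ∀ x y, hh (x, y) =
          if y ∈ B then (if x ∈ A then a else cc) else (if x ∈ A then b else dd) := by
        intro x y
        simp [hhdef, SimpleFunc.piecewise_apply, Set.mem_preimage]
      have hvals : ∀ pt : X × Y, hh pt ∈ I := by
        rintro ⟨x, y⟩
        rw [happ]
        split_ifs <;> assumption
      have hmain := hEq hh hvals
      have hinner : ∀ x, (∫ y, g (hh (x, y)) ∂mu)
          = if x ∈ A then p * β + q * β' else r * β + s * β' := by
        intro x
        by_cases hx : x ∈ A
        · have h0 : (fun y => g (hh (x, y))) = fun y => if y ∈ B then g a else g b := by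
            funext y; rw [happ x y]; by_cases hy : y ∈ B <;> simp [hy, hx]
          rw [h0, integral_ite mu hB, hga, hgb]
          simp [hx]
          rfl
        · have h0 : (fun y => g (hh (x, y))) = fun y => if y ∈ B then g cc else g dd := by
            funext y; rw [happ x y]; by_cases hy : y ∈ B <;> simp [hy, hx]
          rw [h0, integral_ite mu hB, hgcc, hgdd]
          simp [hx]
          rfl
      have hLHS : (∫ x, f (G (∫ y, g (hh (x, y)) ∂mu)) ∂lam)
          = φ (p * β + q * β') * α + φ (r * β + s * β') * α' := by
        have h0 : (fun x => f (G (∫ y, g (hh (x, y)) ∂mu)))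
            = fun x => if x ∈ A then φ (p * β + q * β') else φ (r * β + s * β') := by
          funext x
          rw [hinner x]
          by_cases hx : x ∈ A <;> simp [hx, hφdef]
        rw [h0, integral_ite lam hA]
      have hinner2 : ∀ y, (∫ x, f (hh (x, y)) ∂lam)
          = if y ∈ B then φ p * α + φ r * α' else φ q * α + φ s * α' := by
        intro y
        by_cases hy : y ∈ B
        · have h0 : (fun x => f (hh (x, y))) = fun x => if x ∈ A then f a else f cc := by
            funext x; rw [happ x y]; by_cases hx : x ∈ A <;> simp [hx, hy]
          rw [h0, integral_ite lam hA]
          simp only [hy, if_true]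
          rfl
        · have h0 : (fun x => f (hh (x, y))) = fun x => if x ∈ A then f b else f dd := by
            funext x; rw [happ x y]; by_cases hx : x ∈ A <;> simp [hx, hy]
          rw [h0, integral_ite lam hA]
          simp only [hy, if_false]
          rfl
      have hRHS : (∫ y, g (F (∫ x, f (hh (x, y)) ∂lam)) ∂mu)
          = ψ (φ p * α + φ r * α') * β + ψ (φ q * α + φ s * α') * β' := by
        have h0 : (fun y => g (F (∫ x, f (hh (x, y)) ∂lam)))
            = fun y => if y ∈ B then ψ (φ p * α + φ r * α') else ψ (φ q * α + φ s * α') := by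
          funext y
          rw [hinner2 y]
          by_cases hy : y ∈ B <;> simp [hy, hψdef]
        rw [h0, integral_ite mu hB]
      rw [hLHS, hRHS] at hmain
      have hppq : 0 < p * β + q * β' := by positivity
      have hprs : 0 < r * β + s * β' := by positivity
      have hφ1 := hφpos _ hppq
      have hφ2 := hφpos _ hprs
      have hP : 0 < φ (p * β + q * β') * α + φ (r * β + s * β') * α' := by positivity
      have hmain2 := congrArg f hmain
      rw [hfF _ hP] at hmain2
      exact hmain2
    -- bisymmetry equation
    have hbisym : ∀ p q r s : ℝ, 0 < p → 0 < q → 0 < r → 0 < s →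
        Φ (p * β + q * β') (r * β + s * β') = Φ p r * β + Φ q s * β' := by
      intro p q r s hp hq hr hs
      have h1 := hstar p q r s hp hq hr hs
      have hpq : 0 < p * β + q * β' := by positivity
      have hrs : 0 < r * β + s * β' := by positivity
      rw [← hφΦ _ _ hpq hrs] at h1
      have hΦ1 := hΦpos p r hp hr
      have hΦ2 := hΦpos q s hq hs
      exact hφinj _ _ (hΦpos _ _ hpq hrs) (by positivity) h1
    set χ : ℝ → ℝ := fun x => Φ x x with hχdef
    have hχpos : ∀ x : ℝ, 0 < x → 0 < χ x := fun x hx => hΦpos x x hx hx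
    have hχjensen : ∀ p q : ℝ, 0 < p → 0 < q →
        χ (p * β + q * β') = χ p * β + χ q * β' := by
      intro p q hp hq
      exact hbisym p q p q hp hq hp hq
    have hχcont : ContinuousOn χ (Set.Ioi 0) := by
      have c1 : ContinuousOn (fun x : ℝ => φ x * α + φ x * α') (Set.Ioi 0) :=
        (hφcont.mul continuousOn_const).add (hφcont.mul continuousOn_const)
      have hmaps : Set.MapsTo (fun x : ℝ => φ x * α + φ x * α') (Set.Ioi 0) (Set.Ioi 0) := by
        intro x hx
        have := hφpos x hx
        exact Set.mem_Ioi.2 (by positivity)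
      exact hψcont.comp c1 hmaps
    obtain ⟨k₂, e₂, hχaff⟩ := affine_of_jensen χ hβ hβ' hχcont hχjensen
    have hdia : ∀ p q r : ℝ, 0 < p → 0 < q → 0 < r →
        Φ (p * β + q * β') (r * β + q * β') = Φ p r * β + χ q * β' := by
      intro p q r hp hq hr
      exact hbisym p q r q hp hq hr hq
    -- diagonal translation property of Φ
    have htransΦ : ∀ x y t : ℝ, 0 < x → 0 < y → 0 < t →
        Φ (x + t) (y + t) = Φ x y + k₂ * t := by
      intro x y t hx hy ht
      have hminpos : 0 < min x y := lt_min hx hy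
      set q₁ : ℝ := min x y / (2 * β') with hq₁def
      have hq₁pos : 0 < q₁ := div_pos hminpos (by positivity)
      have hq₁β' : q₁ * β' = min x y / 2 := by
        rw [hq₁def]; field_simp
      set p : ℝ := (x - q₁ * β') / β with hpdef
      set r : ℝ := (y - q₁ * β') / β with hrdef
      have hppos : 0 < p := by
        apply div_pos _ hβ
        rw [hq₁β']
        have := min_le_left x y
        linarith
      have hrpos : 0 < r := by
        apply div_pos _ hβ
        rw [hq₁β']
        have := min_le_right x y
        linarith
      have hx' : p * β + q₁ * β' = x := by
        rw [hpdef, div_mul_cancel₀ _ (ne_of_gt hβ)]; ring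
      have hy' : r * β + q₁ * β' = y := by
        rw [hrdef, div_mul_cancel₀ _ (ne_of_gt hβ)]; ring
      have h1 := hdia p q₁ r hppos hq₁pos hrpos
      rw [hx', hy'] at h1
      set q₂ : ℝ := q₁ + t / β' with hq₂def
      have hq₂pos : 0 < q₂ := by
        have : 0 < t / β' := div_pos ht hβ'
        rw [hq₂def]; linarith
      have h2 := hdia p q₂ r hppos hq₂pos hrpos
      have hx2 : p * β + q₂ * β' = x + t := by
        rw [hq₂def]
        have htβ : (q₁ + t / β') * β' = q₁ * β' + t := by field_simp
        rw [htβ, ← add_assoc]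
        rw [show p * β + q₁ * β' + t = (p * β + q₁ * β') + t from rfl, hx']
      have hy2 : r * β + q₂ * β' = y + t := by
        rw [hq₂def]
        have htβ : (q₁ + t / β') * β' = q₁ * β' + t := by field_simp
        rw [htβ, ← add_assoc]
        rw [show r * β + q₁ * β' + t = (r * β + q₁ * β') + t from rfl, hy']
      rw [hx2, hy2] at h2
      rw [hχaff q₁ hq₁pos] at h1
      rw [hχaff q₂ hq₂pos] at h2
      have hq₂q₁ : q₂ - q₁ = t / β' := by rw [hq₂def]; ring
      have htt : t / β' * β' = t := div_mul_cancel₀ t (ne_of_gt hβ')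
      have : (k₂ * q₂ + e₂) * β' - (k₂ * q₁ + e₂) * β' = k₂ * t := by
        have h3 : (k₂ * q₂ + e₂) * β' - (k₂ * q₁ + e₂) * β' = k₂ * (q₂ - q₁) * β' := by ring
        rw [h3, hq₂q₁]
        rw [show k₂ * (t / β') * β' = k₂ * (t / β' * β') from by ring, htt]
      linarith
    -- Φ(x,y) - k₂ x depends only on x - y
    have hΦdiff : ∀ x y x' y' : ℝ, 0 < x → 0 < y → 0 < x' → 0 < y' →
        x - y = x' - y' → Φ x y - k₂ * x = Φ x' y' - k₂ * x' := by
      have aux : ∀ x y x' y' : ℝ, 0 < x → 0 < y → 0 < x' → 0 < y' →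
          x - y = x' - y' → x ≤ x' → Φ x y - k₂ * x = Φ x' y' - k₂ * x' := by
        intro x y x' y' hx hy hx' hy' hd hle
        rcases eq_or_lt_of_le hle with heq | hlt
        · have hyy : y = y' := by linarith
          rw [heq, hyy]
        · have h := htransΦ x y (x' - x) hx hy (by linarith)
          have e1 : x + (x' - x) = x' := by ring
          have e2 : y + (x' - x) = y' := by linarith
          rw [e1, e2] at h
          rw [h]; ring
      intro x y x' y' hx hy hx' hy' hd
      rcases le_total x x' with h | h
      · exact aux x y x' y' hx hy hx' hy' hd h
      · exact (aux x' y' x y hx' hy' hx hy hd.symm h).symm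
    have hmax1 : ∀ w : ℝ, (0:ℝ) < 1 + max w 0 := fun w => by
      have := le_max_right w 0; linarith
    have hmaxd : ∀ w : ℝ, (1 + max w 0) - (1 + max (-w) 0) = w := by
      intro w
      rcases le_total 0 w with h | h
      · rw [max_eq_left h, max_eq_right (neg_nonpos.2 h)]; ring
      · rw [max_eq_right h, max_eq_left (neg_nonneg.2 h)]; ring
    set D : ℝ → ℝ := fun w => Φ (1 + max w 0) (1 + max (-w) 0) - k₂ * (1 + max w 0) with hDdef
    have hΦD : ∀ x y : ℝ, 0 < x → 0 < y → Φ x y = k₂ * x + D (x - y) := by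
      intro x y hx hy
      have h := hΦdiff x y (1 + max (x - y) 0) (1 + max (-(x - y)) 0) hx hy
        (hmax1 _) (hmax1 _) (hmaxd (x - y)).symm
      simp only [hDdef]
      linarith
    have hDcont : Continuous D := by
      have hc1 : Continuous fun w : ℝ => 1 + max w 0 :=
        continuous_const.add (continuous_id.max continuous_const)
      have hc2 : Continuous fun w : ℝ => 1 + max (-w) 0 :=
        continuous_const.add (continuous_neg.max continuous_const)
      have hφ1 : Continuous fun w : ℝ => φ (1 + max w 0) :=
        hφcont.comp_continuous hc1 (fun w => Set.mem_Ioi.2 (hmax1 w))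
      have hφ2 : Continuous fun w : ℝ => φ (1 + max (-w) 0) :=
        hφcont.comp_continuous hc2 (fun w => Set.mem_Ioi.2 (hmax1 (-w)))
      have hs : Continuous fun w : ℝ => φ (1 + max w 0) * α + φ (1 + max (-w) 0) * α' :=
        (hφ1.mul continuous_const).add (hφ2.mul continuous_const)
      have hψs : Continuous fun w : ℝ =>
          ψ (φ (1 + max w 0) * α + φ (1 + max (-w) 0) * α') := by
        apply hψcont.comp_continuous hs
        intro w
        have p1 := hφpos _ (hmax1 w)
        have p2 := hφpos _ (hmax1 (-w))
        exact Set.mem_Ioi.2 (by positivity)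
      simp only [hDdef, hΦdef]
      exact hψs.sub (continuous_const.mul hc1)
    clear_value D
    have hDeq : ∀ w z : ℝ, D (w * β + z * β') = D w * β + D z * β' := by
      intro w z
      set p : ℝ := 1 + max w 0 with hp0
      set q : ℝ := 1 + max z 0 with hq0
      set r : ℝ := 1 + max (-w) 0 with hr0
      set s : ℝ := 1 + max (-z) 0 with hs0
      have hpp : 0 < p := hmax1 w
      have hqq : 0 < q := hmax1 z
      have hrr : 0 < r := hmax1 (-w)
      have hss : 0 < s := hmax1 (-z)
      have h := hbisym p q r s hpp hqq hrr hss
      have hpos1 : 0 < p * β + q * β' := by positivity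
      have hpos2 : 0 < r * β + s * β' := by positivity
      rw [hΦD _ _ hpos1 hpos2, hΦD p r hpp hrr, hΦD q s hqq hss] at h
      have e1 : p - r = w := hmaxd w
      have e2 : q - s = z := hmaxd z
      have e3 : (p * β + q * β') - (r * β + s * β') = w * β + z * β' := by
        have := e1; have := e2; nlinarith [e1, e2]
      rw [e1, e2, e3] at h
      linarith
    have hDadd : ∀ a b : ℝ, D (a + b) = D a + D b - D 0 * (β + β') := by
      intro a b
      have ha : a / β * β = a := div_mul_cancel₀ a (ne_of_gt hβ)
      have hb : b / β' * β' = b := div_mul_cancel₀ b (ne_of_gt hβ')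
      have h1 := hDeq (a / β) (b / β')
      rw [show a / β * β + b / β' * β' = a + b from by rw [ha, hb]] at h1
      have h2 := hDeq (a / β) 0
      rw [show a / β * β + 0 * β' = a from by rw [ha]; ring] at h2
      have h3 := hDeq 0 (b / β')
      rw [show 0 * β + b / β' * β' = b from by rw [hb]; ring] at h3
      have hexp : D 0 * (β + β') = D 0 * β + D 0 * β' := by ring
      rw [hexp]
      linarith
    set N : ℝ → ℝ := fun x => D x - D 0 * (β + β') with hNdef
    have hNadd : ∀ a b : ℝ, N (a + b) = N a + N b := by
      intro a b
      simp only [hNdef]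
      have := hDadd a b
      linarith
    have hNcont : Continuous N := hDcont.sub continuous_const
    have hNlin := lin_of_add N hNadd hNcont
    set k₃ : ℝ := N 1 with hk₃def
    set e₃ : ℝ := D 0 * (β + β') with he₃def
    have hD : ∀ x : ℝ, D x = k₃ * x + e₃ := by
      intro x
      have h := hNlin x
      simp only [hNdef] at h
      linarith
    set A₀ : ℝ := k₂ + k₃ with hA₀def
    set B₀ : ℝ := -k₃ with hB₀def
    have hkey : ∀ x y : ℝ, 0 < x → 0 < y →
        (φ x * α + φ y * α' = φ (A₀ * x + B₀ * y + e₃)) ∧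
          0 < A₀ * x + B₀ * y + e₃ := by
      intro x y hx hy
      have hΦxy : Φ x y = A₀ * x + B₀ * y + e₃ := by
        rw [hΦD x y hx hy, hD (x - y), hA₀def, hB₀def]; ring
      constructor
      · rw [← hΦxy]; exact (hφΦ x y hx hy).symm
      · rw [← hΦxy]; exact hΦpos x y hx hy
    have hA₀pos : 0 < A₀ := by
      rcases lt_trichotomy A₀ 0 with hlt | heq0 | hpos
      · exfalso
        set x₀ : ℝ := max 1 ((B₀ + e₃ + 1) / (-A₀)) with hx₀def
        have hx₀pos : (0:ℝ) < x₀ := lt_of_lt_of_le one_pos (le_max_left _ _)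
        have harg := (hkey x₀ 1 hx₀pos one_pos).2
        have hle : (B₀ + e₃ + 1) / (-A₀) ≤ x₀ := le_max_right _ _
        have hmul : A₀ * x₀ ≤ A₀ * ((B₀ + e₃ + 1) / (-A₀)) :=
          mul_le_mul_of_nonpos_left hle (le_of_lt hlt)
        have hA₀ne : A₀ ≠ 0 := ne_of_lt hlt
        have heqv : A₀ * ((B₀ + e₃ + 1) / (-A₀)) = -(B₀ + e₃ + 1) := by
          rw [div_neg, mul_neg, mul_comm, div_mul_cancel₀ _ hA₀ne]
        rw [heqv] at hmul
        linarith
      · exfalso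
        have h1 := (hkey 1 1 one_pos one_pos).1
        have h2 := (hkey 2 1 two_pos one_pos).1
        have e : A₀ * 1 + B₀ * 1 + e₃ = A₀ * 2 + B₀ * 1 + e₃ := by rw [heq0]; ring
        have h3 : φ 1 * α + φ 1 * α' = φ 2 * α + φ 1 * α' := by
          rw [h1, e, h2]
        have h4 : φ 1 = φ 2 := by
          have h5 : φ 1 * α = φ 2 * α := by linarith
          exact mul_right_cancel₀ (ne_of_gt hα) h5
        have := hφinj 1 2 one_pos two_pos h4
        norm_num at this
      · exact hpos
    have hB₀pos : 0 < B₀ := by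
      rcases lt_trichotomy B₀ 0 with hlt | heq0 | hpos
      · exfalso
        set y₀ : ℝ := max 1 ((A₀ + e₃ + 1) / (-B₀)) with hy₀def
        have hy₀pos : (0:ℝ) < y₀ := lt_of_lt_of_le one_pos (le_max_left _ _)
        have harg := (hkey 1 y₀ one_pos hy₀pos).2
        have hle : (A₀ + e₃ + 1) / (-B₀) ≤ y₀ := le_max_right _ _
        have hmul : B₀ * y₀ ≤ B₀ * ((A₀ + e₃ + 1) / (-B₀)) :=
          mul_le_mul_of_nonpos_left hle (le_of_lt hlt)
        have hB₀ne : B₀ ≠ 0 := ne_of_lt hlt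
        have heqv : B₀ * ((A₀ + e₃ + 1) / (-B₀)) = -(A₀ + e₃ + 1) := by
          rw [div_neg, mul_neg, mul_comm, div_mul_cancel₀ _ hB₀ne]
        rw [heqv] at hmul
        linarith
      · exfalso
        have h1 := (hkey 1 1 one_pos one_pos).1
        have h2 := (hkey 1 2 one_pos two_pos).1
        have e : A₀ * 1 + B₀ * 1 + e₃ = A₀ * 1 + B₀ * 2 + e₃ := by rw [heq0]; ring
        have h3 : φ 1 * α + φ 1 * α' = φ 1 * α + φ 2 * α' := by
          rw [h1, e, h2]
        have h4 : φ 1 = φ 2 := by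
          have h5 : φ 1 * α' = φ 2 * α' := by linarith
          exact mul_right_cancel₀ (ne_of_gt hα') h5
        have := hφinj 1 2 one_pos two_pos h4
        norm_num at this
      · exact hpos
    have htransφ : ∀ x x' d : ℝ, 0 < x → 0 < x' → 0 < d →
        φ (x + d) - φ x = φ (x' + d) - φ x' := by
      intro x x' d hx hx' hd
      set y : ℝ := A₀ * d / B₀ + 1 with hydef
      have hypos : 0 < y := by
        have := div_pos (mul_pos hA₀pos hd) hB₀pos
        rw [hydef]; linarith
      have claim : ∀ u : ℝ, 0 < u → φ (u + d) * α + φ 1 * α' = φ u * α + φ y * α' := by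
        intro u hu
        have h1 := (hkey (u + d) 1 (by linarith) one_pos).1
        have h2 := (hkey u y hu hypos).1
        have e : A₀ * (u + d) + B₀ * 1 + e₃ = A₀ * u + B₀ * y + e₃ := by
          rw [hydef]
          field_simp
          ring
        rw [h1, e, h2]
      have hc1 := claim x hx
      have hc2 := claim x' hx'
      have h0 : α * (φ (x + d) - φ x) = α * (φ (x' + d) - φ x') := by linarith
      exact mul_left_cancel₀ (ne_of_gt hα) h0
    obtain ⟨k, e, hφaff⟩ := affine_of_translation φ hφcont htransφ
    have he0 : e = 0 := by
      rcases lt_trichotomy e 0 with hlt | h0 | hgt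
      · exfalso
        rcases le_or_gt k 0 with hk | hk
        · have h1 := hφpos 1 one_pos
          rw [hφaff 1 one_pos] at h1
          nlinarith
        · have hx2 : (0:ℝ) < -e / (2 * k) := div_pos (by linarith) (by linarith)
          set x : ℝ := min 1 (-e / (2 * k)) with hxdef
          have hxpos : 0 < x := lt_min one_pos hx2
          have h1 := hφpos x hxpos
          rw [hφaff x hxpos] at h1
          have hxle : x ≤ -e / (2 * k) := min_le_right _ _
          have hmul2 : k * x ≤ k * (-e / (2 * k)) :=
            mul_le_mul_of_nonneg_left hxle (le_of_lt hk)
          have heq2 : k * (-e / (2 * k)) = -e / 2 := by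
            field_simp
          rw [heq2] at hmul2
          linarith
      · exact h0
      · exfalso
        obtain ⟨u, hu, hφu⟩ := hφsurj (e / 2) (by linarith)
        rw [hφaff u hu] at hφu
        have hk : k < 0 := by nlinarith
        set x : ℝ := (-e - 1) / k with hxdef
        have hxpos : 0 < x := div_pos_of_neg_of_neg (by linarith) hk
        have h1 := hφpos x hxpos
        rw [hφaff x hxpos] at h1
        have hkx : k * x = -e - 1 := by
          rw [hxdef, mul_comm, div_mul_cancel₀ _ hk.ne]
        linarith
    have hkpos : 0 < k := by
      have h1 := hφpos 1 one_pos
      rw [hφaff 1 one_pos, he0] at h1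
      linarith
    refine ⟨k, hkpos, fun t ht => ?_⟩
    have hgt : 0 < g t := hgbij.mapsTo ht
    have hft : φ (g t) = f t := by
      simp only [hφdef]
      rw [hGg t ht]
    rw [← hft, hφaff _ hgt, he0, add_zero]
  · rintro ⟨c, hc, hfg⟩ hsf hvalsI
    have hmuU : 0 < mu Set.univ := lt_of_lt_of_le hB0 (measure_mono (Set.subset_univ B))
    have hlamU : 0 < lam Set.univ := lt_of_lt_of_le hA0 (measure_mono (Set.subset_univ A))
    set k : SimpleFunc (X × Y) ℝ := hsf.map g with hkdef
    have hkco : ∀ pt : X × Y, k pt = g (hsf pt) := fun pt =>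
      SimpleFunc.map_apply g hsf pt
    have hkint : Integrable (fun z : X × Y => g (hsf z)) (lam.prod mu) := by
      have h0 := SimpleFunc.integrable_of_isFiniteMeasure (μ := lam.prod mu) k
      have h1 : ⇑k = fun z : X × Y => g (hsf z) := funext hkco
      rwa [h1] at h0
    have hsecY : ∀ x : X, Integrable (fun y => g (hsf (x, y))) mu := by
      intro x
      have h0 := SimpleFunc.integrable_of_isFiniteMeasure (μ := mu)
        (k.comp (fun y => (x, y)) measurable_prodMk_left)
      have h1 : ⇑(k.comp (fun y => (x, y)) measurable_prodMk_left)
          = fun y => g (hsf (x, y)) := by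
        funext y
        rw [SimpleFunc.coe_comp]
        exact hkco (x, y)
      rwa [h1] at h0
    have hsecX : ∀ y : Y, Integrable (fun x => g (hsf (x, y))) lam := by
      intro y
      have h0 := SimpleFunc.integrable_of_isFiniteMeasure (μ := lam)
        (k.comp (fun x => (x, y)) measurable_prodMk_right)
      have h1 : ⇑(k.comp (fun x => (x, y)) measurable_prodMk_right)
          = fun x => g (hsf (x, y)) := by
        funext x
        rw [SimpleFunc.coe_comp]
        exact hkco (x, y)
      rwa [h1] at h0
    have hgpos : ∀ pt : X × Y, 0 < g (hsf pt) := fun pt => hgbij.mapsTo (hvalsI pt)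
    have hwpos : ∀ x : X, 0 < ∫ y, g (hsf (x, y)) ∂mu := by
      intro x
      rw [integral_pos_iff_support_of_nonneg (fun y => (hgpos (x, y)).le) (hsecY x)]
      have h0 : Function.support (fun y => g (hsf (x, y))) = Set.univ := by
        ext y
        simp only [Function.mem_support, Set.mem_univ, iff_true]
        exact ne_of_gt (hgpos (x, y))
      rw [h0]; exact hmuU
    have hvpos : ∀ y : Y, 0 < ∫ x, g (hsf (x, y)) ∂lam := by
      intro y
      rw [integral_pos_iff_support_of_nonneg (fun x => (hgpos (x, y)).le) (hsecX y)]
      have h0 : Function.support (fun x => g (hsf (x, y))) = Set.univ := by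
        ext x
        simp only [Function.mem_support, Set.mem_univ, iff_true]
        exact ne_of_gt (hgpos (x, y))
      rw [h0]; exact hlamU
    have hInt : Integrable (Function.uncurry (fun x y => g (hsf (x, y)))) (lam.prod mu) := by
      have h1 : Function.uncurry (fun x y => g (hsf (x, y))) = fun z : X × Y => g (hsf z) := by
        funext z; cases z; rfl
      rwa [h1]
    set T : ℝ := ∫ z, g (hsf z) ∂(lam.prod mu) with hTdef
    have hswap1 : ∫ x, (∫ y, g (hsf (x, y)) ∂mu) ∂lam = T := by
      rw [MeasureTheory.integral_integral hInt, hTdef]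
    have hswap2 : ∫ y, (∫ x, g (hsf (x, y)) ∂lam) ∂mu = T := by
      rw [← MeasureTheory.integral_integral_swap hInt]
      exact hswap1
    have hTpos : 0 < T := by
      rw [← hswap1]
      have hwint : Integrable (fun x => ∫ y, g (hsf (x, y)) ∂mu) lam := by
        have := hInt.integral_prod_left
        simpa using this
      rw [integral_pos_iff_support_of_nonneg (fun x => (hwpos x).le) hwint]
      have h0 : Function.support (fun x => ∫ y, g (hsf (x, y)) ∂mu) = Set.univ := by
        ext x
        simp only [Function.mem_support, Set.mem_univ, iff_true]
        exact ne_of_gt (hwpos x)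
      rw [h0]; exact hlamU
    -- compute LHS
    have hLHSfun : (fun x => f (G (∫ y, g (hsf (x, y)) ∂mu)))
        = fun x => c * ∫ y, g (hsf (x, y)) ∂mu := by
      funext x
      have hw := hwpos x
      rw [hfg _ (hGI _ hw), hgG _ hw]
    have hLHS : ∫ x, f (G (∫ y, g (hsf (x, y)) ∂mu)) ∂lam = c * T := by
      rw [hLHSfun, MeasureTheory.integral_const_mul, hswap1]
    -- compute RHS
    have hRHSfun : (fun y => g (F (∫ x, f (hsf (x, y)) ∂lam)))
        = fun y => ∫ x, g (hsf (x, y)) ∂lam := by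
      funext y
      have h1 : ∫ x, f (hsf (x, y)) ∂lam = c * ∫ x, g (hsf (x, y)) ∂lam := by
        rw [← MeasureTheory.integral_const_mul]
        apply integral_congr_ae
        exact Filter.Eventually.of_forall (fun x => hfg _ (hvalsI (x, y)))
      set v : ℝ := ∫ x, g (hsf (x, y)) ∂lam with hvdef
      have hv : 0 < v := hvpos y
      have hcv : 0 < c * v := mul_pos hc hv
      rw [h1]
      have hFin : F (c * v) ∈ I := hFI _ hcv
      have h2 : c * g (F (c * v)) = c * v := by
        rw [← hfg _ hFin]; exact hfF _ hcv
      exact mul_left_cancel₀ (ne_of_gt hc) h2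
    have hRHS : ∫ y, g (F (∫ x, f (hsf (x, y)) ∂lam)) ∂mu = T := by
      rw [hRHSfun, hswap2]
    rw [hLHS, hRHS]
    have hGT : G T ∈ I := hGI T hTpos
    have hfGT : f (G T) = c * T := by rw [hfg _ hGT, hgG T hTpos]
    calc F (c * T) = F (f (G T)) := by rw [hfGT]
      _ = G T := hFf _ hGT
end
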